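/- arXiv:1902.07183 — 7 statements merged into one kernel-verified Lean document; each statement's English description precedes it below -/
import Mathlib

section
/- Let L be a module over a commutative ring and let inl, inr : L → L⊕L be the two canonical inclusions, inducing algebra homomorphisms Λ^* L → Λ^*(L⊕L). Then for all a_1,…,a_k ∈ L one has ((a_1,0)∧(0,a_1))∧⋯∧((a_k,0)∧(0,a_k)) = (−1)^{k(k−1)/2}·(Λ^k inl)(a_1∧⋯∧a_k) ∧ (Λ^k inr)(a_1∧⋯∧a_k) in Λ^{2k}(L⊕L). Consequently, for a decomposable element α = a_1∧⋯∧a_k ∈ Λ^k L, the 'square' α^□ := ⋀_{i=1}^k ((a_i,0)∧(0,a_i)) depends only on the element α and not on the chosen decomposition, and (−α)^□ = α^□. -/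
set_option synthInstance.maxHeartbeats 1000000
set_option maxHeartbeats 1000000

open ExteriorAlgebra

private lemma iota_swap_prod {R M : Type} [CommRing R] [AddCommGroup M] [Module R M] :
    ∀ (n : ℕ) (f : Fin n → M) (v : M),
      ι R v * (List.ofFn fun i => ι R (f i)).prod =
        ((-1 : R) ^ n) • ((List.ofFn fun i => ι R (f i)).prod * ι R v) := by
  intro n
  induction n with
  | zero => intro f v; simp
  | succ n ih =>
    intro f v
    rw [List.ofFn_succ, List.prod_cons]
    have h1 : ι R v * ι R (f 0) = -(ι R (f 0) * ι R v) :=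
      eq_neg_of_add_eq_zero_left (by rw [add_comm]; exact ι_add_mul_swap _ _)
    calc ι R v * (ι R (f 0) * (List.ofFn fun i => ι R (f i.succ)).prod)
        = (ι R v * ι R (f 0)) * (List.ofFn fun i => ι R (f i.succ)).prod := by
          rw [mul_assoc]
      _ = -(ι R (f 0) * (ι R v * (List.ofFn fun i => ι R (f i.succ)).prod)) := by
          rw [h1]; noncomm_ring
      _ = -(ι R (f 0) * (((-1 : R) ^ n) • ((List.ofFn fun i => ι R (f i.succ)).prod * ι R v))) := by
          rw [ih]
      _ = ((-1 : R) ^ (n + 1)) • (ι R (f 0) * (List.ofFn fun i => ι R (f i.succ)).prod * ι R v) := by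
          rw [mul_smul_comm, ← neg_smul, pow_succ, mul_comm ((-1:R)^n) (-1)]
          rw [neg_one_mul, mul_assoc]

private lemma key_prod {R M : Type} [CommRing R] [AddCommGroup M] [Module R M] :
    ∀ (n : ℕ) (f g : Fin n → M),
      (List.ofFn fun i => ι R (f i) * ι R (g i)).prod =
        ((-1 : R) ^ (n * (n - 1) / 2)) •
          ((List.ofFn fun i => ι R (f i)).prod * (List.ofFn fun i => ι R (g i)).prod) := by
  intro n
  induction n with
  | zero => intro f g; simp
  | succ n ih =>
    intro f g
    rw [List.ofFn_succ, List.ofFn_succ, List.ofFn_succ, List.prod_cons, List.prod_cons,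
      List.prod_cons, ih (fun i => f i.succ) (fun i => g i.succ)]
    set A := (List.ofFn fun i => ι R (f i.succ)).prod with hA
    set B := (List.ofFn fun i => ι R (g i.succ)).prod with hB
    have hsw : ι R (g 0) * A = ((-1 : R) ^ n) • (A * ι R (g 0)) :=
      iota_swap_prod n (fun i => f i.succ) (g 0)
    have hexp : (n + 1) * (n + 1 - 1) / 2 = n * (n - 1) / 2 + n := by
      have h2 : (n + 1) * n = n * (n - 1) + n * 2 := by
        cases n with
        | zero => rfl
        | succ m => simp [Nat.succ_sub_one]; ring
      simp only [Nat.add_sub_cancel]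
      rw [h2, mul_comm n 2, Nat.add_mul_div_left _ _ (by norm_num : 0 < 2)]
    calc ι R (f 0) * ι R (g 0) * (((-1 : R) ^ (n * (n - 1) / 2)) • (A * B))
        = ((-1 : R) ^ (n * (n - 1) / 2)) • (ι R (f 0) * (ι R (g 0) * A) * B) := by
          rw [mul_smul_comm]; noncomm_ring
      _ = ((-1 : R) ^ (n * (n - 1) / 2)) • (ι R (f 0) * (((-1:R)^n) • (A * ι R (g 0))) * B) := by
          rw [hsw]
      _ = ((-1 : R) ^ ((n + 1) * (n + 1 - 1) / 2)) • (ι R (f 0) * A * (ι R (g 0) * B)) := by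
          rw [mul_smul_comm, smul_mul_assoc, smul_smul, hexp, pow_add]
          congr 1
          noncomm_ring

/-- **The squaring trick** (equation (squaring) of the paper).
For a module `L` over a commutative ring `R` and `a_1, …, a_k ∈ L` one has
`((a_1,0)∧(0,a_1))∧⋯∧((a_k,0)∧(0,a_k))
  = (−1)^{k(k−1)/2} (Λ^k inl)(a_1∧⋯∧a_k) ∧ (Λ^k inr)(a_1∧⋯∧a_k)`
in `Λ^{2k}(L⊕L)`.  Consequently, for a decomposable `α = a_1∧⋯∧a_k ∈ Λ^k L` the square
`α^□ := ⋀ᵢ ((a_i,0)∧(0,a_i))` depends only on `α` and not on the chosen decomposition,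
and `(−α)^□ = α^□`. -/
theorem squaring_trick (R : Type) [CommRing R] (L : Type) [AddCommGroup L] [Module R L]
    (k : ℕ) (a : Fin k → L) :
    ((List.ofFn fun i => ExteriorAlgebra.ι R ((a i, (0 : L)) : L × L) *
        ExteriorAlgebra.ι R (((0 : L), a i) : L × L)).prod =
      ((-1 : R) ^ (k * (k - 1) / 2)) •
        (ExteriorAlgebra.map (LinearMap.inl R L L) (ExteriorAlgebra.ιMulti R k a) *
          ExteriorAlgebra.map (LinearMap.inr R L L) (ExteriorAlgebra.ιMulti R k a))) ∧
    (∀ b : Fin k → L,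
      (ExteriorAlgebra.ιMulti R k a = ExteriorAlgebra.ιMulti R k b ∨
        ExteriorAlgebra.ιMulti R k a = -ExteriorAlgebra.ιMulti R k b) →
      (List.ofFn fun i => ExteriorAlgebra.ι R ((a i, (0 : L)) : L × L) *
          ExteriorAlgebra.ι R (((0 : L), a i) : L × L)).prod =
        (List.ofFn fun i => ExteriorAlgebra.ι R ((b i, (0 : L)) : L × L) *
          ExteriorAlgebra.ι R (((0 : L), b i) : L × L)).prod) := by
  have H : ∀ c : Fin k → L,
      (List.ofFn fun i => ExteriorAlgebra.ι R ((c i, (0 : L)) : L × L) *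
          ExteriorAlgebra.ι R (((0 : L), c i) : L × L)).prod =
        ((-1 : R) ^ (k * (k - 1) / 2)) •
          (ExteriorAlgebra.map (LinearMap.inl R L L) (ExteriorAlgebra.ιMulti R k c) *
            ExteriorAlgebra.map (LinearMap.inr R L L) (ExteriorAlgebra.ιMulti R k c)) := by
    intro c
    rw [map_apply_ιMulti, map_apply_ιMulti, ιMulti_apply, ιMulti_apply]
    exact key_prod k (fun i => (c i, 0)) (fun i => (0, c i))
  refine ⟨H a, fun b hb => ?_⟩
  rw [H a, H b]
  rcases hb with h | h
  · rw [h]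
  · rw [h, map_neg, map_neg, neg_mul_neg]
end

section
/- Let N be a lattice of finite rank r with dual M := Hom_ℤ(N,ℤ), and let n ∈ N be primitive. Set M_n := {m ∈ M : m(n) = 0}. Then: (a) the image of the contraction ι_n : Λ^* M → Λ^* M equals the subalgebra Λ^* M_n ⊆ Λ^* M, and this subalgebra also equals the kernel of ι_n; (b) the image of the composite contraction ι_{(0,n)} ∘ ι_{(n,0)} : Λ^*(M⊕M) → Λ^*(M⊕M), where (n,0) and (0,n) are viewed as elements of N⊕N = Hom(M⊕M,ℤ), equals the subalgebra Λ^*(M_n⊕M_n) ⊆ Λ^*(M⊕M). -/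
set_option synthInstance.maxHeartbeats 1000000
set_option maxHeartbeats 1000000

open Module ExteriorAlgebra

/-- `n ∈ N` is primitive: it is not a positive multiple of any other lattice element. -/
def IsPrimitiveElt {N : Type} [AddCommGroup N] (n : N) : Prop :=
  ∀ (k : ℤ), 0 < k → ∀ m : N, n = k • m → k = 1

section Helpers
variable {R M : Type*} [CommRing R] [AddCommGroup M] [Module R M]

private lemma ct_ι_mul (d : Module.Dual R M) (a : M) (b : ExteriorAlgebra R M) :
    CliffordAlgebra.contractLeft d (ι R a * b)
      = d a • b - ι R a * CliffordAlgebra.contractLeft d b :=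
  CliffordAlgebra.contractLeft_ι_mul (d := d) a b

private lemma swap3 (u w : M) (x : ExteriorAlgebra R M) :
    ι R u * (ι R w * x) = -(ι R w * (ι R u * x)) := by
  have h : ι R u * ι R w = -(ι R w * ι R u) :=
    eq_neg_of_add_eq_zero_left (ι_add_mul_swap u w)
  rw [← mul_assoc, h, neg_mul, mul_assoc]

private lemma sq3 (u : M) (x : ExteriorAlgebra R M) : ι R u * (ι R u * x) = 0 := by
  rw [← mul_assoc, ι_sq_zero, zero_mul]

private lemma left_induction (T : Submodule R (ExteriorAlgebra R M))
    (h1 : (1 : ExteriorAlgebra R M) ∈ T)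
    (hι : ∀ (m : M) x, x ∈ T → ι R m * x ∈ T) : ∀ x, x ∈ T := by
  intro x
  have key : ∀ y : ExteriorAlgebra R M, ∀ t ∈ T, y * t ∈ T := by
    intro y
    induction y using ExteriorAlgebra.induction with
    | algebraMap r => intro t ht; rw [← Algebra.smul_def]; exact T.smul_mem r ht
    | ι m => exact fun t ht => hι m t ht
    | mul x y hx hy => intro t ht; rw [mul_assoc]; exact hx _ (hy t ht)
    | add x y hx hy => intro t ht; rw [add_mul]; exact T.add_mem (hx t ht) (hy t ht)
  simpa using key x 1 h1

private lemma ct_adjoin_eq_zero (d : Module.Dual R M) (S : Set M) (hS : ∀ m ∈ S, d m = 0)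
    {x} (hx : x ∈ Algebra.adjoin R (ι R '' S)) : CliffordAlgebra.contractLeft d x = 0 := by
  have key : ∀ y (_ : y ∈ Algebra.adjoin R (ι R '' S)),
      ∀ t, CliffordAlgebra.contractLeft d t = 0 →
        CliffordAlgebra.contractLeft d (y * t) = 0 := by
    intro y hy
    induction hy using Algebra.adjoin_induction with
    | mem m hm =>
      obtain ⟨v, hv, rfl⟩ := hm
      intro t ht
      rw [ct_ι_mul, hS v hv, ht, zero_smul, mul_zero, sub_zero]
    | algebraMap r => intro t ht; rw [← Algebra.smul_def, map_smul, ht, smul_zero]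
    | add x y hx hy hx' hy' =>
      intro t ht; rw [add_mul, map_add, hx' t ht, hy' t ht, add_zero]
    | mul x y hx hy hx' hy' => intro t ht; rw [mul_assoc]; exact hx' _ (hy' t ht)
  simpa using key x hx 1 (CliffordAlgebra.contractLeft_one _ d)

private lemma decomp_one (d : Module.Dual R M) (m₀ : M) (hm₀ : d m₀ = 1)
    (x : ExteriorAlgebra R M) :
    ∃ a ∈ Algebra.adjoin R (ι R '' ((LinearMap.ker d : Submodule R M) : Set M)),
      ∃ b ∈ Algebra.adjoin R (ι R '' ((LinearMap.ker d : Submodule R M) : Set M)),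
        x = a + ι R m₀ * b := by
  set A := Algebra.adjoin R (ι R '' ((LinearMap.ker d : Submodule R M) : Set M)) with hA
  have hKA : ∀ k : M, d k = 0 → ι R k ∈ A :=
    fun k hk => Algebra.subset_adjoin ⟨k, LinearMap.mem_ker.mpr hk, rfl⟩
  set T : Submodule R (ExteriorAlgebra R M) :=
    Subalgebra.toSubmodule A ⊔
      Submodule.map (LinearMap.mulLeft R (ι R m₀)) (Subalgebra.toSubmodule A) with hT
  have hmemT : ∀ y : ExteriorAlgebra R M,
      y ∈ T ↔ ∃ a ∈ A, ∃ b ∈ A, y = a + ι R m₀ * b := by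
    intro y
    constructor
    · intro hy
      obtain ⟨a, ha, z, hz, rfl⟩ := Submodule.mem_sup.mp hy
      obtain ⟨b, hb, rfl⟩ := hz
      exact ⟨a, ha, b, hb, rfl⟩
    · rintro ⟨a, ha, b, hb, rfl⟩
      exact Submodule.mem_sup.mpr ⟨a, ha, _, ⟨b, hb, rfl⟩, rfl⟩
  rw [← hmemT]
  refine left_induction T ?_ ?_ x
  · exact (hmemT 1).mpr ⟨1, one_mem A, 0, zero_mem _, by simp⟩
  · intro m y hy
    obtain ⟨a, ha, b, hb, rfl⟩ := (hmemT y).mp hy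
    set k := m - d m • m₀ with hk
    have hdk : d k = 0 := by simp [hk, hm₀]
    have hkA : ι R k ∈ A := hKA _ hdk
    have hι : ι R m = ι R k + d m • ι R m₀ := by
      rw [hk, map_sub, map_smul, sub_add_cancel]
    have key : ι R m * (a + ι R m₀ * b)
        = (ι R k * a) + ι R m₀ * (d m • a - ι R k * b) := by
      have h1 : ι R k * (ι R m₀ * b) = ι R m₀ * (-(ι R k * b)) := by
        rw [swap3, mul_neg]
      have h2 : ι R m₀ * (ι R m₀ * b) = (0 : ExteriorAlgebra R M) := sq3 _ _
      rw [hι]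
      calc (ι R k + d m • ι R m₀) * (a + ι R m₀ * b)
          = ι R k * a + ι R k * (ι R m₀ * b)
            + (d m • (ι R m₀ * a) + d m • (ι R m₀ * (ι R m₀ * b))) := by
            simp only [add_mul, mul_add, smul_mul_assoc, smul_add]; abel
        _ = ι R k * a + ι R m₀ * (d m • a - ι R k * b) := by
            rw [h1, h2, smul_zero, add_zero, mul_sub, mul_smul_comm, mul_neg]; abel
    rw [hmemT, key]
    exact ⟨_, mul_mem hkA ha, _, sub_mem (A.smul_mem ha (d m)) (mul_mem hkA hb), rfl⟩
end Helpers

section Helpers2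
variable {R M : Type*} [CommRing R] [AddCommGroup M] [Module R M]

private lemma part_a (d : Module.Dual R M) (m₀ : M) (hm₀ : d m₀ = 1) :
    (LinearMap.range (CliffordAlgebra.contractLeft d :
        ExteriorAlgebra R M →ₗ[R] ExteriorAlgebra R M) =
      Subalgebra.toSubmodule (Algebra.adjoin R
        (ι R '' ((LinearMap.ker d : Submodule R M) : Set M)))) ∧
    LinearMap.range (CliffordAlgebra.contractLeft d :
        ExteriorAlgebra R M →ₗ[R] ExteriorAlgebra R M) =
      LinearMap.ker (CliffordAlgebra.contractLeft d :
        ExteriorAlgebra R M →ₗ[R] ExteriorAlgebra R M) := by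
  set A := Algebra.adjoin R (ι R '' ((LinearMap.ker d : Submodule R M) : Set M)) with hA
  have hA0 : ∀ y ∈ A, CliffordAlgebra.contractLeft d y = 0 :=
    fun y hy => ct_adjoin_eq_zero d _ (fun m hm => LinearMap.mem_ker.mp hm) hy
  have hctb : ∀ b ∈ A, CliffordAlgebra.contractLeft d (ι R m₀ * b) = b := by
    intro b hb; rw [ct_ι_mul, hm₀, one_smul, hA0 b hb, mul_zero, sub_zero]
  have hct : ∀ x : ExteriorAlgebra R M, CliffordAlgebra.contractLeft d x ∈ A ∧
      (CliffordAlgebra.contractLeft d x = 0 → x ∈ A) := by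
    intro x
    obtain ⟨a, ha, b, hb, rfl⟩ := decomp_one d m₀ hm₀ x
    have hval : CliffordAlgebra.contractLeft d (a + ι R m₀ * b) = b := by
      rw [map_add, hA0 a ha, hctb b hb, zero_add]
    refine ⟨by rw [hval]; exact hb, fun h0 => ?_⟩
    rw [hval] at h0
    subst h0
    simpa using ha
  have hrange : LinearMap.range (CliffordAlgebra.contractLeft d :
      ExteriorAlgebra R M →ₗ[R] ExteriorAlgebra R M) = Subalgebra.toSubmodule A := by
    apply le_antisymm
    · rintro _ ⟨x, rfl⟩
      exact (hct x).1
    · intro b hb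
      exact ⟨ι R m₀ * b, hctb b hb⟩
  refine ⟨hrange, le_antisymm ?_ ?_⟩
  · rintro _ ⟨x, rfl⟩
    exact LinearMap.mem_ker.mpr (CliffordAlgebra.contractLeft_contractLeft _ x)
  · intro x hx
    rw [hrange]
    exact (hct x).2 (LinearMap.mem_ker.mp hx)

private lemma part_b (d₁ d₂ : Module.Dual R M) (e₁ e₂ : M)
    (h11 : d₁ e₁ = 1) (h12 : d₁ e₂ = 0) (h21 : d₂ e₁ = 0) (h22 : d₂ e₂ = 1)
    (K : Submodule R M) (hK1 : ∀ k ∈ K, d₁ k = 0) (hK2 : ∀ k ∈ K, d₂ k = 0)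
    (hKdec : ∀ m : M, m - d₁ m • e₁ - d₂ m • e₂ ∈ K) :
    LinearMap.range ((CliffordAlgebra.contractLeft d₂ :
        ExteriorAlgebra R M →ₗ[R] ExteriorAlgebra R M) ∘ₗ
      (CliffordAlgebra.contractLeft d₁ :
        ExteriorAlgebra R M →ₗ[R] ExteriorAlgebra R M)) =
      Subalgebra.toSubmodule (Algebra.adjoin R (ι R '' (K : Set M))) := by
  set A := Algebra.adjoin R (ι R '' (K : Set M)) with hA
  have hKA : ∀ k ∈ K, ι R k ∈ A := fun k hk => Algebra.subset_adjoin ⟨k, hk, rfl⟩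
  have hA01 : ∀ y ∈ A, CliffordAlgebra.contractLeft d₁ y = 0 :=
    fun y hy => ct_adjoin_eq_zero d₁ _ (fun m hm => hK1 m hm) hy
  have hA02 : ∀ y ∈ A, CliffordAlgebra.contractLeft d₂ y = 0 :=
    fun y hy => ct_adjoin_eq_zero d₂ _ (fun m hm => hK2 m hm) hy
  set T : Submodule R (ExteriorAlgebra R M) :=
    ((Subalgebra.toSubmodule A ⊔
        Submodule.map (LinearMap.mulLeft R (ι R e₁)) (Subalgebra.toSubmodule A)) ⊔
      Submodule.map (LinearMap.mulLeft R (ι R e₂)) (Subalgebra.toSubmodule A)) ⊔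
      Submodule.map (LinearMap.mulLeft R (ι R e₁ * ι R e₂)) (Subalgebra.toSubmodule A) with hT
  have hmemT : ∀ y : ExteriorAlgebra R M, y ∈ T ↔
      ∃ a ∈ A, ∃ b ∈ A, ∃ c ∈ A, ∃ e ∈ A,
        y = a + ι R e₁ * b + ι R e₂ * c + ι R e₁ * (ι R e₂ * e) := by
    intro y
    constructor
    · intro hy
      obtain ⟨w3, hw3, z4, hz4, rfl⟩ := Submodule.mem_sup.mp hy
      obtain ⟨w2, hw2, z3, hz3, rfl⟩ := Submodule.mem_sup.mp hw3
      obtain ⟨a, ha, z2, hz2, rfl⟩ := Submodule.mem_sup.mp hw2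
      obtain ⟨b, hb, rfl⟩ := hz2
      obtain ⟨c, hc, rfl⟩ := hz3
      obtain ⟨e, he, rfl⟩ := hz4
      exact ⟨a, ha, b, hb, c, hc, e, he, by
        simp only [LinearMap.mulLeft_apply, mul_assoc]⟩
    · rintro ⟨a, ha, b, hb, c, hc, e, he, rfl⟩
      refine Submodule.mem_sup.mpr ⟨a + ι R e₁ * b + ι R e₂ * c, ?_, ι R e₁ * (ι R e₂ * e),
        ⟨e, he, by simp only [LinearMap.mulLeft_apply, mul_assoc]⟩, rfl⟩
      refine Submodule.mem_sup.mpr ⟨a + ι R e₁ * b, ?_, ι R e₂ * c, ⟨c, hc, rfl⟩, rfl⟩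
      exact Submodule.mem_sup.mpr ⟨a, ha, ι R e₁ * b, ⟨b, hb, rfl⟩, rfl⟩
  have hdecomp : ∀ x : ExteriorAlgebra R M, ∃ a ∈ A, ∃ b ∈ A, ∃ c ∈ A, ∃ e ∈ A,
      x = a + ι R e₁ * b + ι R e₂ * c + ι R e₁ * (ι R e₂ * e) := by
    intro x
    rw [← hmemT]
    refine left_induction T ?_ ?_ x
    · exact (hmemT 1).mpr ⟨1, one_mem A, 0, zero_mem _, 0, zero_mem _, 0, zero_mem _, by simp⟩
    · intro m y hy
      obtain ⟨a, ha, b, hb, c, hc, e, he, rfl⟩ := (hmemT y).mp hy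
      set k := m - d₁ m • e₁ - d₂ m • e₂ with hk
      have hkK : k ∈ K := hKdec m
      have hkA : ι R k ∈ A := hKA _ hkK
      have hι : ι R m = ι R k + d₁ m • ι R e₁ + d₂ m • ι R e₂ := by
        rw [hk, map_sub, map_sub, map_smul, map_smul]; abel
      have hkb : ι R k * (ι R e₁ * b) = -(ι R e₁ * (ι R k * b)) := swap3 _ _ _
      have hkc : ι R k * (ι R e₂ * c) = -(ι R e₂ * (ι R k * c)) := swap3 _ _ _
      have hke : ι R k * (ι R e₁ * (ι R e₂ * e)) = ι R e₁ * (ι R e₂ * (ι R k * e)) := by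
        rw [swap3 k e₁, swap3 k e₂, mul_neg, neg_neg]
      have h1b : ι R e₁ * (ι R e₁ * b) = 0 := sq3 _ _
      have h1e : ι R e₁ * (ι R e₁ * (ι R e₂ * e)) = 0 := sq3 _ _
      have h2b : ι R e₂ * (ι R e₁ * b) = -(ι R e₁ * (ι R e₂ * b)) := swap3 _ _ _
      have h2c : ι R e₂ * (ι R e₂ * c) = 0 := sq3 _ _
      have h2e : ι R e₂ * (ι R e₁ * (ι R e₂ * e)) = 0 := by
        rw [swap3, sq3, mul_zero, neg_zero]
      have key : ι R m * (a + ι R e₁ * b + ι R e₂ * c + ι R e₁ * (ι R e₂ * e)) =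
          (ι R k * a) + ι R e₁ * (d₁ m • a - ι R k * b) + ι R e₂ * (d₂ m • a - ι R k * c)
            + ι R e₁ * (ι R e₂ * (ι R k * e + (d₁ m • c - d₂ m • b))) := by
        rw [hι]
        simp only [add_mul, smul_mul_assoc, mul_add, mul_sub, mul_smul_comm,
          hkb, hkc, hke, h1b, h1e, h2b, h2c, h2e, smul_zero, smul_neg, mul_neg, mul_zero]
        abel
      rw [hmemT, key]
      exact ⟨_, mul_mem hkA ha,
        _, sub_mem (A.smul_mem ha (d₁ m)) (mul_mem hkA hb),
        _, sub_mem (A.smul_mem ha (d₂ m)) (mul_mem hkA hc),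
        _, add_mem (mul_mem hkA he)
            (sub_mem (A.smul_mem hc (d₁ m)) (A.smul_mem hb (d₂ m))), rfl⟩
  have hctcomp : ∀ b ∈ A, ∀ c ∈ A, ∀ e ∈ A, ∀ a ∈ A,
      CliffordAlgebra.contractLeft d₂ (CliffordAlgebra.contractLeft d₁
        (a + ι R e₁ * b + ι R e₂ * c + ι R e₁ * (ι R e₂ * e))) = e := by
    intro b hb c hc e he a ha
    have hct1b : CliffordAlgebra.contractLeft d₁ (ι R e₁ * b) = b := by
      rw [ct_ι_mul, h11, one_smul, hA01 b hb, mul_zero, sub_zero]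
    have hct1c : CliffordAlgebra.contractLeft d₁ (ι R e₂ * c) = 0 := by
      rw [ct_ι_mul, h12, zero_smul, hA01 c hc, mul_zero, sub_zero]
    have hct12 : CliffordAlgebra.contractLeft d₁ (ι R e₂ * e) = 0 := by
      rw [ct_ι_mul, h12, zero_smul, hA01 e he, mul_zero, sub_zero]
    have hct1e : CliffordAlgebra.contractLeft d₁ (ι R e₁ * (ι R e₂ * e)) = ι R e₂ * e := by
      rw [ct_ι_mul, h11, one_smul, hct12, mul_zero, sub_zero]
    have hct2e : CliffordAlgebra.contractLeft d₂ (ι R e₂ * e) = e := by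
      rw [ct_ι_mul, h22, one_smul, hA02 e he, mul_zero, sub_zero]
    simp only [map_add, hA01 a ha, hct1b, hct1c, hct1e, hA02 b hb, hct2e,
      zero_add, add_zero]
  apply le_antisymm
  · rintro _ ⟨x, rfl⟩
    obtain ⟨a, ha, b, hb, c, hc, e, he, rfl⟩ := hdecomp x
    rw [LinearMap.comp_apply]
    rw [hctcomp b hb c hc e he a ha]
    exact he
  · intro e he
    refine ⟨ι R e₁ * (ι R e₂ * e), ?_⟩
    have := hctcomp 0 (zero_mem _) 0 (zero_mem _) e he 0 (zero_mem _)
    simpa using this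
end Helpers2

lemma exists_dual_one (N : Type) [AddCommGroup N] [Module.Free ℤ N] [Module.Finite ℤ N]
    (n : N) (hn : IsPrimitiveElt n) : ∃ m₀ : Module.Dual ℤ N, Module.Dual.eval ℤ N n m₀ = 1 := by
  classical
  set I : Ideal ℤ := LinearMap.range (Module.Dual.eval ℤ N n) with hI
  obtain ⟨a, ha⟩ := (IsPrincipalIdealRing.principal I).principal
  set b := Module.Free.chooseBasis ℤ N with hb
  have hdvd : ∀ i, a ∣ b.coord i n := by
    intro i
    have hmem : b.coord i n ∈ I := ⟨b.coord i, rfl⟩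
    rw [ha] at hmem
    rwa [Ideal.submodule_span_eq, Ideal.mem_span_singleton] at hmem
  have key : n = a • ∑ i, ((b.coord i n) / a) • b i := by
    conv_lhs => rw [← b.sum_repr n]
    rw [Finset.smul_sum]
    refine Finset.sum_congr rfl fun i _ => ?_
    rw [smul_smul, Int.mul_ediv_cancel' (hdvd i), Basis.coord_apply]
  have ha0 : a ≠ 0 := by
    intro h
    have hn0 : n = 0 := by rw [key, h, zero_smul]
    have := hn 2 (by norm_num) 0 (by rw [hn0, smul_zero])
    norm_num at this
  have hunit : IsUnit a := by
    rcases ha0.lt_or_gt with h | h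
    · have hkey2 : n = (-a) • (-(∑ i, ((b.coord i n) / a) • b i)) := by
        rw [smul_neg, neg_smul, neg_neg]; exact key
      have := hn (-a) (by omega) _ hkey2
      rw [Int.isUnit_iff]; omega
    · have := hn a h _ key
      rw [this]; exact isUnit_one
  have h1 : (1 : ℤ) ∈ I := by
    rw [ha, Ideal.submodule_span_eq, Ideal.mem_span_singleton]
    exact hunit.dvd
  exact h1


/-- **Image of the contraction operators** (identification of the Frobenius algebras `𝒞_n`
inside `𝒞_0` in the multiplicity TrQFT).  Let `N` be a lattice with dual `M` and `n ∈ N`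
primitive, `M_n := n^⊥ ⊆ M`.  Then
(a) the image of the contraction `ι_n : Λ^* M → Λ^* M` equals the subalgebra
`Λ^* M_n ⊆ Λ^* M`, and this subalgebra also equals the kernel of `ι_n`;
(b) the image of `ι_{(0,n)} ∘ ι_{(n,0)} : Λ^*(M⊕M) → Λ^*(M⊕M)` equals the subalgebra
`Λ^*(M_n ⊕ M_n)`. -/
theorem contraction_image (N : Type) [AddCommGroup N] [Module.Free ℤ N] [Module.Finite ℤ N]
    (n : N) (hn : IsPrimitiveElt n) :
    (LinearMap.range (CliffordAlgebra.contractLeft (Module.Dual.eval ℤ N n) :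
        ExteriorAlgebra ℤ (Module.Dual ℤ N) →ₗ[ℤ] ExteriorAlgebra ℤ (Module.Dual ℤ N)) =
      Subalgebra.toSubmodule (Algebra.adjoin ℤ
        ((Submodule.map (ExteriorAlgebra.ι ℤ)
          (LinearMap.ker (Module.Dual.eval ℤ N n)) :
            Submodule ℤ (ExteriorAlgebra ℤ (Module.Dual ℤ N))) : Set _)) ∧
      LinearMap.range (CliffordAlgebra.contractLeft (Module.Dual.eval ℤ N n) :
          ExteriorAlgebra ℤ (Module.Dual ℤ N) →ₗ[ℤ] ExteriorAlgebra ℤ (Module.Dual ℤ N)) =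
        LinearMap.ker (CliffordAlgebra.contractLeft (Module.Dual.eval ℤ N n) :
          ExteriorAlgebra ℤ (Module.Dual ℤ N) →ₗ[ℤ] ExteriorAlgebra ℤ (Module.Dual ℤ N))) ∧
    LinearMap.range
        ((CliffordAlgebra.contractLeft
            ((Module.Dual.eval ℤ N n).comp (LinearMap.snd ℤ (Module.Dual ℤ N) (Module.Dual ℤ N)) :
              Module.Dual ℤ (Module.Dual ℤ N × Module.Dual ℤ N)) :
          ExteriorAlgebra ℤ (Module.Dual ℤ N × Module.Dual ℤ N) →ₗ[ℤ]
            ExteriorAlgebra ℤ (Module.Dual ℤ N × Module.Dual ℤ N)) ∘ₗ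
         (CliffordAlgebra.contractLeft
            ((Module.Dual.eval ℤ N n).comp (LinearMap.fst ℤ (Module.Dual ℤ N) (Module.Dual ℤ N)) :
              Module.Dual ℤ (Module.Dual ℤ N × Module.Dual ℤ N)) :
          ExteriorAlgebra ℤ (Module.Dual ℤ N × Module.Dual ℤ N) →ₗ[ℤ]
            ExteriorAlgebra ℤ (Module.Dual ℤ N × Module.Dual ℤ N))) =
      Subalgebra.toSubmodule (Algebra.adjoin ℤ
        ((Submodule.map (ExteriorAlgebra.ι ℤ)
          ((LinearMap.ker (Module.Dual.eval ℤ N n)).prod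
            (LinearMap.ker (Module.Dual.eval ℤ N n))) :
            Submodule ℤ (ExteriorAlgebra ℤ (Module.Dual ℤ N × Module.Dual ℤ N))) : Set _)) := by
  obtain ⟨m₀, hm₀⟩ := exists_dual_one N n hn
  constructor
  · have h := part_a (Module.Dual.eval ℤ N n) m₀ hm₀
    simpa only [Submodule.map_coe] using h
  · have h := part_b
      ((Module.Dual.eval ℤ N n).comp (LinearMap.fst ℤ (Module.Dual ℤ N) (Module.Dual ℤ N)))
      ((Module.Dual.eval ℤ N n).comp (LinearMap.snd ℤ (Module.Dual ℤ N) (Module.Dual ℤ N)))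
      (m₀, 0) (0, m₀)
      (by simpa using hm₀) (by simp) (by simp) (by simpa using hm₀)
      ((LinearMap.ker (Module.Dual.eval ℤ N n)).prod (LinearMap.ker (Module.Dual.eval ℤ N n)))
      (fun k hk => by
        simpa using LinearMap.mem_ker.mp (Submodule.mem_prod.mp hk).1)
      (fun k hk => by
        simpa using LinearMap.mem_ker.mp (Submodule.mem_prod.mp hk).2)
      (fun m => by
        refine Submodule.mem_prod.mpr ⟨?_, ?_⟩ <;>
          simp [LinearMap.mem_ker, hm₀, mul_comm, sub_eq_zero] <;>
          simp [Module.Dual.eval_apply] at hm₀ ⊢ <;> simp [hm₀])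
    simpa only [Submodule.map_coe] using h
end

section
/- Let N be a lattice of rank r ≥ 1 with dual M := Hom_ℤ(N,ℤ), let n ∈ N be primitive, and set M_n := {m ∈ M : m(n) = 0}. Let Θ_0 be a generator of Λ^r M and Θ_n a generator of Λ^{r−1} M_n, with squares Θ_0^□ ∈ Λ^{2r}(M⊕M) and Θ_n^□ ∈ Λ^{2r−2}(M_n⊕M_n) (these squares do not depend on the choice of generator). Then Θ_n^□ = ι_{(0,n)}(ι_{(n,0)}(Θ_0^□)), where (n,0), (0,n) ∈ N⊕N = Hom(M⊕M,ℤ) act by contraction on Λ^*(M⊕M). -/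
set_option synthInstance.maxHeartbeats 1000000
set_option maxHeartbeats 1000000

open Module

/-- The image of the `d`-th exterior power `Λ^d W` of a submodule `W ⊆ V` inside the
exterior algebra of `V`. -/
noncomputable def extSubPow {V : Type} [AddCommGroup V] (W : Submodule ℤ V) (d : ℕ) :
    Submodule ℤ (ExteriorAlgebra ℤ V) :=
  (Submodule.map (ExteriorAlgebra.ι ℤ) W) ^ d

/-- The squaring operation `α ↦ α^□` on degree-`k` elements, from `Λ^* V` to `Λ^*(V ⊕ V)`. -/
noncomputable def extSq {V : Type} [AddCommGroup V] (k : ℕ) (x : ExteriorAlgebra ℤ V) :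
    ExteriorAlgebra ℤ (V × V) :=
  ((-1 : ℤ) ^ (k * (k - 1) / 2)) •
    (ExteriorAlgebra.map (LinearMap.inl ℤ V V) x * ExteriorAlgebra.map (LinearMap.inr ℤ V V) x)

section Aux
variable {V : Type} [AddCommGroup V]

lemma prodList_mem_pow {A : Type*} [Semiring A] [Algebra ℤ A] (p : Submodule ℤ A)
    (l : List A) (h : ∀ x ∈ l, x ∈ p) : l.prod ∈ p ^ l.length := by
  induction l with
  | nil =>
    rw [List.prod_nil, List.length_nil, pow_zero]
    exact Submodule.one_le.mp le_rfl
  | cons a l ih =>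
    rw [List.prod_cons, List.length_cons, pow_succ']
    exact Submodule.mul_mem_mul (h a (by simp)) (ih fun x hx => h x (by simp [hx]))

lemma ιMulti_mem_span_singleton {d : ℕ} (v w : Fin d → V)
    (hw : ∀ i, w i ∈ Submodule.span ℤ (Set.range v)) :
    ExteriorAlgebra.ιMulti ℤ d w ∈ Submodule.span ℤ {ExteriorAlgebra.ιMulti ℤ d v} := by
  have hc : ∀ i, ∃ c : Fin d → ℤ, ∑ j, c j • v j = w i := fun i =>
    Submodule.mem_span_range_iff_exists_fun ℤ |>.mp (hw i)
  choose c hc using hc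
  have hwe : w = fun i => ∑ j, c i j • v j := by funext i; rw [hc i]
  rw [hwe]
  rw [show (ExteriorAlgebra.ιMulti ℤ d (fun i => ∑ j, c i j • v j)) =
      ((ExteriorAlgebra.ιMulti ℤ d).toMultilinearMap fun i => ∑ j, c i j • v j) from rfl,
    MultilinearMap.map_sum]
  refine Submodule.sum_mem _ fun r _ => ?_
  rw [show ((ExteriorAlgebra.ιMulti ℤ d).toMultilinearMap fun i => c i (r i) • v (r i)) =
      (ExteriorAlgebra.ιMulti ℤ d).toMultilinearMap fun i => (fun j => c j (r j)) i • (v ∘ r) i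
      from rfl, MultilinearMap.map_smul_univ]
  refine Submodule.smul_mem _ _ ?_
  by_cases hr : Function.Injective r
  · have hbij := (Finite.injective_iff_bijective).mp hr
    set σ := Equiv.ofBijective r hbij with hσ
    have : v ∘ r = v ∘ σ := rfl
    rw [show (ExteriorAlgebra.ιMulti ℤ d).toMultilinearMap (v ∘ r)
        = ExteriorAlgebra.ιMulti ℤ d (v ∘ σ) from rfl,
      AlternatingMap.map_perm, Units.smul_def]
    exact Submodule.smul_mem _ _ (Submodule.mem_span_singleton_self _)
  · obtain ⟨i, j, hij, hne⟩ := Function.not_injective_iff.mp hr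
    have : ExteriorAlgebra.ιMulti ℤ d (v ∘ r) = 0 :=
      AlternatingMap.map_eq_zero_of_eq _ _ (by simp [Function.comp, hij]) hne
    rw [show (ExteriorAlgebra.ιMulti ℤ d).toMultilinearMap (v ∘ r)
        = ExteriorAlgebra.ιMulti ℤ d (v ∘ r) from rfl, this]
    exact Submodule.zero_mem _

lemma extSubPow_eq_span {W : Submodule ℤ V} {d : ℕ} (v : Fin d → V)
    (hmem : ∀ i, v i ∈ W) (hspan : W ≤ Submodule.span ℤ (Set.range v)) :
    extSubPow W d = Submodule.span ℤ {ExteriorAlgebra.ιMulti ℤ d v} := by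
  refine le_antisymm ?_ ?_
  · rw [extSubPow, Submodule.pow_eq_span_pow_set, Submodule.span_le]
    rintro x hx
    obtain ⟨f, rfl⟩ := Set.mem_pow.mp hx
    have : ∀ i, ∃ w : V, w ∈ W ∧ ExteriorAlgebra.ι ℤ w = (f i : ExteriorAlgebra ℤ V) := by
      intro i
      obtain ⟨w, hw, hwi⟩ := (f i).2
      exact ⟨w, hw, hwi⟩
    choose w hwW hwι using this
    have : (List.ofFn fun i => (f i : ExteriorAlgebra ℤ V)).prod
        = ExteriorAlgebra.ιMulti ℤ d w := by
      rw [ExteriorAlgebra.ιMulti_apply]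
      exact congrArg List.prod (congrArg List.ofFn (funext fun i => (hwι i).symm))
    rw [this]
    exact ιMulti_mem_span_singleton v w fun i => hspan (hwW i)
  · rw [Submodule.span_le, Set.singleton_subset_iff]
    have : ExteriorAlgebra.ιMulti ℤ d v
        = (List.ofFn fun i => ExteriorAlgebra.ι ℤ (v i)).prod := ExteriorAlgebra.ιMulti_apply v
    rw [SetLike.mem_coe, extSubPow, this]
    have hlen : (List.ofFn fun i => ExteriorAlgebra.ι ℤ (v i)).length = d := by simp
    have hmem' := prodList_mem_pow (Submodule.map (ExteriorAlgebra.ι ℤ) W)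
      (List.ofFn fun i => ExteriorAlgebra.ι ℤ (v i)) (fun x hx => by
        obtain ⟨i, rfl⟩ := List.mem_ofFn.mp hx
        exact ⟨v i, hmem i, rfl⟩)
    rwa [hlen] at hmem'

end Aux

section Contract
variable {V : Type} [AddCommGroup V]

lemma contract_prod_of_vanish (f : Module.Dual ℤ V) (l : List V)
    (hl : ∀ x ∈ l, f x = 0) (y : ExteriorAlgebra ℤ V) :
    CliffordAlgebra.contractLeft f ((l.map (ExteriorAlgebra.ι ℤ)).prod * y)
      = ((-1 : ℤ) ^ l.length) •
        ((l.map (ExteriorAlgebra.ι ℤ)).prod * CliffordAlgebra.contractLeft f y) := by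
  induction l with
  | nil => simp
  | cons a l ih =>
    rw [List.map_cons, List.prod_cons, mul_assoc, CliffordAlgebra.contractLeft_ι_mul,
      hl a (by simp), zero_smul, zero_sub, ih (fun x hx => hl x (by simp [hx])),
      List.length_cons, pow_succ']
    rw [mul_smul, neg_one_smul, mul_smul_comm, mul_assoc]

lemma contract_prod_eq_zero (f : Module.Dual ℤ V) (l : List V)
    (hl : ∀ x ∈ l, f x = 0) :
    CliffordAlgebra.contractLeft f ((l.map (ExteriorAlgebra.ι ℤ)).prod) = 0 := by
  have := contract_prod_of_vanish f l hl 1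
  simpa using this

lemma smul_ιMulti_eq_zero_imp {d : ℕ} (v : Fin d → V) (f : Fin d → Module.Dual ℤ V)
    (hf : ∀ i k, f i (v k) = if i = k then 1 else 0) {a : ℤ}
    (h : a • ExteriorAlgebra.ιMulti ℤ d v = 0) : a = 0 := by
  induction d with
  | zero =>
    rw [ExteriorAlgebra.ιMulti_zero_apply] at h
    have : (algebraMap ℤ (ExteriorAlgebra ℤ V)) a = 0 := by
      rw [Algebra.algebraMap_eq_smul_one]; exact h
    exact (ExteriorAlgebra.algebraMap_eq_zero_iff V a).mp this
  | succ d ih =>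
    have h2 := congrArg (CliffordAlgebra.contractLeft (f 0)) h
    rw [map_smul, map_zero, ExteriorAlgebra.ιMulti_succ_apply,
      CliffordAlgebra.contractLeft_ι_mul] at h2
    have hz : CliffordAlgebra.contractLeft (f 0)
        (ExteriorAlgebra.ιMulti ℤ d (Matrix.vecTail v)) = 0 := by
      rw [ExteriorAlgebra.ιMulti_apply,
        show (List.ofFn fun i => ExteriorAlgebra.ι ℤ (Matrix.vecTail v i))
          = (List.ofFn (Matrix.vecTail v)).map (ExteriorAlgebra.ι ℤ) by
            rw [List.map_ofFn]; rfl]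
      refine contract_prod_eq_zero _ _ fun x hx => ?_
      obtain ⟨i, rfl⟩ := List.mem_ofFn.mp hx
      have h0 := hf 0 i.succ
      rw [if_neg (Fin.succ_ne_zero i).symm] at h0
      simpa [Matrix.vecTail] using h0
    rw [hz, mul_zero, sub_zero, hf 0 0, if_pos rfl, one_smul] at h2
    exact ih (Matrix.vecTail v) (fun i => f i.succ) (fun i k => by
      have := hf i.succ k.succ
      rwa [show (if i.succ = k.succ then (1:ℤ) else 0) = if i = k then 1 else 0 by
        simp [Fin.succ_inj]] at this) h2
end Contract


section Prim
variable {N : Type} [AddCommGroup N] [Module.Free ℤ N] [Module.Finite ℤ N]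

lemma exists_dual_eq_one {n : N} (hn : IsPrimitiveElt n) :
    ∃ φ : Module.Dual ℤ N, φ n = 1 := by
  have hn0 : n ≠ 0 := by
    intro h
    have := hn 2 (by norm_num) 0 (by rw [h, smul_zero])
    norm_num at this
  set S : Submodule ℤ ℤ := LinearMap.range (Module.Dual.eval ℤ N n) with hS
  set g : ℤ := Submodule.IsPrincipal.generator S with hg
  have hSpan : Submodule.span ℤ {g} = S := Submodule.IsPrincipal.span_singleton_generator S
  set b := Module.finBasis ℤ N with hb
  have hmemS : ∀ ψ : Module.Dual ℤ N, ψ n ∈ S := fun ψ => ⟨ψ, rfl⟩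
  have hdvd : ∀ i, g ∣ b.coord i n := by
    intro i
    obtain ⟨c, hc⟩ := Submodule.mem_span_singleton.mp (hSpan ▸ hmemS (b.coord i))
    exact ⟨c, by rw [← hc, smul_eq_mul, mul_comm]⟩
  have hg0 : g ≠ 0 := by
    intro h0
    apply hn0
    have : ∀ i, b.repr n i = 0 := by
      intro i
      have := hdvd i
      rw [h0, zero_dvd_iff, Basis.coord_apply] at this
      exact this
    have hrepr : b.repr n = 0 := Finsupp.ext this
    have := congrArg (b.repr.symm) hrepr
    simpa using this
  set m : N := ∑ i, (b.coord i n / g) • b i with hm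
  have hgm : g • m = n := by
    rw [hm, Finset.smul_sum]
    have : ∀ i ∈ Finset.univ, g • (b.coord i n / g) • b i = b.repr n i • b i := by
      intro i _
      rw [smul_smul, Int.mul_ediv_cancel' (hdvd i), Basis.coord_apply]
    rw [Finset.sum_congr rfl this, Basis.sum_repr]
  have hgu : g = 1 ∨ g = -1 := by
    rcases lt_trichotomy g 0 with hlt | heq | hgt
    · right
      have := hn (-g) (by omega) (-m) (by rw [smul_neg, neg_smul, neg_neg, hgm])
      omega
    · exact absurd heq hg0
    · left; exact hn g hgt m hgm.symm
  obtain ⟨ψ, hψ⟩ := Submodule.IsPrincipal.generator_mem S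
  refine ⟨g • ψ, ?_⟩
  have hψn : ψ n = g := hψ
  rw [LinearMap.smul_apply, hψn, smul_eq_mul]
  rcases hgu with h | h <;> rw [h] <;> norm_num

lemma exists_basis_head {n : N} {φ : Module.Dual ℤ N} (hφ : φ n = 1) :
    ∃ (d : ℕ) (e : Basis (Fin (d + 1)) ℤ N), e 0 = n ∧ Module.finrank ℤ N = d + 1 := by
  set K := LinearMap.ker φ with hK
  haveI : IsNoetherian ℤ N := isNoetherian_of_isNoetherianRing_of_finite ℤ N
  haveI : Module.Finite ℤ K := Module.Finite.iff_fg.mpr (IsNoetherian.noetherian K)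
  set d := Module.finrank ℤ K with hd
  set k := Module.finBasis ℤ K with hk
  set w : Fin (d + 1) → N := Fin.cons n (fun i => (k i : N)) with hw
  have hli : LinearIndependent ℤ w := by
    rw [Fintype.linearIndependent_iff]
    intro c hc
    have hc0 : c 0 = 0 := by
      have := congrArg φ hc
      rw [map_sum, map_zero] at this
      rw [Fin.sum_univ_succ] at this
      simp only [hw, Fin.cons_zero, Fin.cons_succ, map_smul, hφ, smul_eq_mul, mul_one] at this
      have hz : ∀ i ∈ Finset.univ, c i.succ * φ ((k i : N)) = 0 := by
        intro i _
        have hki : φ ((k i : N)) = 0 := LinearMap.mem_ker.mp (k i).2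
        rw [hki, mul_zero]
      rw [Finset.sum_congr rfl hz, Finset.sum_const_zero, add_zero] at this
      exact this
    intro i
    refine Fin.cases hc0 (fun j => ?_) i
    have hsum : ∑ i : Fin d, c i.succ • (k i : N) = 0 := by
      rw [Fin.sum_univ_succ] at hc
      simp only [hw, Fin.cons_zero, Fin.cons_succ] at hc
      rw [hc0, zero_smul, zero_add] at hc
      exact hc
    have hsumK : (∑ i : Fin d, c i.succ • k i : K) = 0 := by
      rw [← Submodule.coe_eq_zero]
      push_cast
      exact hsum
    exact Fintype.linearIndependent_iff.mp k.linearIndependent (fun i => c i.succ) hsumK j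
  have hKle : (K : Set N) ⊆ ↑(Submodule.span ℤ (Set.range w)) := by
    intro y hy
    have h1 : (⟨y, hy⟩ : K) = ∑ i, k.repr ⟨y, hy⟩ i • k i := (k.sum_repr _).symm
    have h2 := congrArg (K.subtype) h1
    simp only [Submodule.coe_subtype, map_sum, map_smul] at h2
    rw [SetLike.mem_coe, h2]
    refine Submodule.sum_mem _ fun i _ => Submodule.smul_mem _ _ ?_
    exact Submodule.subset_span ⟨i.succ, by simp [hw]⟩
  have hsp : ⊤ ≤ Submodule.span ℤ (Set.range w) := by
    intro z _
    have h1 : φ z • n ∈ Submodule.span ℤ (Set.range w) :=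
      Submodule.smul_mem _ _ (Submodule.subset_span ⟨0, by simp [hw]⟩)
    have h2 : z - φ z • n ∈ K := by
      rw [hK, LinearMap.mem_ker, map_sub, map_smul, hφ, smul_eq_mul, mul_one, sub_self]
    have h3 : z = φ z • n + (z - φ z • n) := by abel
    rw [h3]
    exact Submodule.add_mem _ h1 (hKle h2)
  refine ⟨d, Basis.mk hli hsp, ?_, ?_⟩
  · rw [Basis.coe_mk]
    simp [hw]
  · rw [Module.finrank_eq_card_basis (Basis.mk hli hsp), Fintype.card_fin]

end Prim

section More
variable {V : Type} [AddCommGroup V]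

lemma extSq_pm_smul (k : ℕ) {ε : ℤ} (hε : ε = 1 ∨ ε = -1) (x : ExteriorAlgebra ℤ V) :
    extSq k (ε • x) = extSq k x := by
  rcases hε with h | h <;> subst h
  · rw [one_smul]
  · unfold extSq
    rw [map_smul, map_smul, neg_smul, neg_smul, one_smul, one_smul, neg_mul_neg]

lemma eq_pm_smul_of_span_eq {d : ℕ} (v : Fin d → V) (f : Fin d → Module.Dual ℤ V)
    (hf : ∀ i k, f i (v k) = if i = k then 1 else 0) (x : ExteriorAlgebra ℤ V)
    (hx : Submodule.span ℤ {x} = Submodule.span ℤ {ExteriorAlgebra.ιMulti ℤ d v}) :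
    ∃ ε : ℤ, (ε = 1 ∨ ε = -1) ∧ x = ε • ExteriorAlgebra.ιMulti ℤ d v := by
  set G := ExteriorAlgebra.ιMulti ℤ d v with hG
  have hGmem : G ∈ Submodule.span ℤ {x} := by
    rw [hx]; exact Submodule.mem_span_singleton_self _
  obtain ⟨a, ha⟩ := Submodule.mem_span_singleton.mp hGmem
  have hxmem : x ∈ Submodule.span ℤ {G} := by
    rw [← hx]; exact Submodule.mem_span_singleton_self _
  obtain ⟨b, hb⟩ := Submodule.mem_span_singleton.mp hxmem
  have key : (a * b - 1) • G = 0 := by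
    rw [sub_smul, one_smul, sub_eq_zero, mul_smul]
    rw [← hb] at ha
    exact ha
  have hab : a * b - 1 = 0 := smul_ιMulti_eq_zero_imp v f hf key
  have hbu : b = 1 ∨ b = -1 := by
    have : IsUnit b := IsUnit.of_mul_eq_one a (by rw [mul_comm]; omega)
    exact Int.isUnit_iff.mp this
  exact ⟨b, hbu, hb.symm⟩

end More

section Helper
variable {V : Type} [AddCommGroup V]

lemma ιMulti_eq_prod {d : ℕ} (v : Fin d → V) :
    ExteriorAlgebra.ιMulti ℤ d v = ((List.ofFn v).map (ExteriorAlgebra.ι ℤ)).prod := by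
  rw [ExteriorAlgebra.ιMulti_apply, List.map_ofFn]; rfl

end Helper

section Helper2
variable {V : Type} [AddCommGroup V]

lemma contract_ιMulti_eq_zero {d : ℕ} (f : Module.Dual ℤ V) (w : Fin d → V)
    (hw : ∀ i, f (w i) = 0) :
    CliffordAlgebra.contractLeft f (ExteriorAlgebra.ιMulti ℤ d w) = 0 := by
  rw [ιMulti_eq_prod]
  refine contract_prod_eq_zero f _ fun x hx => ?_
  obtain ⟨i, rfl⟩ := List.mem_ofFn.mp hx
  exact hw i

lemma contract_ιMulti_mul {d : ℕ} (f : Module.Dual ℤ V) (w : Fin d → V)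
    (hw : ∀ i, f (w i) = 0) (y : ExteriorAlgebra ℤ V) :
    CliffordAlgebra.contractLeft f (ExteriorAlgebra.ιMulti ℤ d w * y)
      = ((-1 : ℤ) ^ d) • (ExteriorAlgebra.ιMulti ℤ d w * CliffordAlgebra.contractLeft f y) := by
  rw [ιMulti_eq_prod, contract_prod_of_vanish f (List.ofFn w)
    (fun x hx => by obtain ⟨i, rfl⟩ := List.mem_ofFn.mp hx; exact hw i) y,
    List.length_ofFn]

lemma contract_ιMulti_succ {d : ℕ} (f : Module.Dual ℤ V) (w : Fin (d + 1) → V)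
    (h0 : f (w 0) = 1) (hw : ∀ i : Fin d, f (w i.succ) = 0) :
    CliffordAlgebra.contractLeft f (ExteriorAlgebra.ιMulti ℤ (d + 1) w)
      = ExteriorAlgebra.ιMulti ℤ d (fun i => w i.succ) := by
  rw [ExteriorAlgebra.ιMulti_succ_apply, CliffordAlgebra.contractLeft_ι_mul, h0, one_smul,
    show Matrix.vecTail w = fun i => w i.succ from rfl,
    contract_ιMulti_eq_zero f _ hw, mul_zero, sub_zero]

lemma contract_ιMulti_succ_mul {d : ℕ} (f : Module.Dual ℤ V) (w : Fin (d + 1) → V)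
    (y : ExteriorAlgebra ℤ V)
    (h0 : f (w 0) = 1) (hw : ∀ i : Fin d, f (w i.succ) = 0)
    (hy : CliffordAlgebra.contractLeft f y = 0) :
    CliffordAlgebra.contractLeft f (ExteriorAlgebra.ιMulti ℤ (d + 1) w * y)
      = ExteriorAlgebra.ιMulti ℤ d (fun i => w i.succ) * y := by
  rw [ExteriorAlgebra.ιMulti_succ_apply, mul_assoc, CliffordAlgebra.contractLeft_ι_mul, h0,
    one_smul, show Matrix.vecTail w = fun i => w i.succ from rfl,
    contract_ιMulti_mul f _ hw y, hy, mul_zero, smul_zero, mul_zero, sub_zero]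

lemma signs_eq (d : ℕ) :
    ((-1 : ℤ) ^ (d * (d - 1) / 2)) = ((-1 : ℤ) ^ ((d + 1) * d / 2)) * ((-1 : ℤ) ^ d) := by
  have h2 : (d + 1) * d = d * (d - 1) + d * 2 := by
    cases d with
    | zero => rfl
    | succ k => simp [Nat.succ_sub_one]; ring
  have hdiv : (d + 1) * d / 2 = d * (d - 1) / 2 + d := by
    rw [h2, Nat.add_mul_div_right _ _ (by norm_num : (0:ℕ) < 2)]
  rw [hdiv, pow_add, mul_assoc, ← pow_add, ← two_mul, pow_mul]
  norm_num

end Helper2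



/-- **`Θ_n^□ = ι_{(n,0)∧(0,n)}(Θ_0^□)`** (used in the construction of the multiplicity TrQFT).
Let `N` be a lattice of rank `r ≥ 1` with dual `M`, `n ∈ N` primitive, `M_n := n^⊥`.
If `Θ_0` generates `Λ^r M` and `Θ_n` generates `Λ^{r−1} M_n`, then
`Θ_n^□ = ι_{(0,n)}(ι_{(n,0)}(Θ_0^□))` in `Λ^*(M ⊕ M)`. -/
theorem sq_top_contract (N : Type) [AddCommGroup N] [Module.Free ℤ N] [Module.Finite ℤ N]
    (r : ℕ) (hr : r = finrank ℤ N) (hr1 : 1 ≤ r)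
    (n : N) (hn : IsPrimitiveElt n)
    (Θ₀ : ExteriorAlgebra ℤ (Module.Dual ℤ N))
    (hΘ₀ : Submodule.span ℤ {Θ₀} = extSubPow (⊤ : Submodule ℤ (Module.Dual ℤ N)) r)
    (Θn : ExteriorAlgebra ℤ (Module.Dual ℤ N))
    (hΘn : Submodule.span ℤ {Θn} = extSubPow (LinearMap.ker (Module.Dual.eval ℤ N n)) (r - 1)) :
    extSq (r - 1) Θn =
      CliffordAlgebra.contractLeft
        ((Module.Dual.eval ℤ N n).comp (LinearMap.snd ℤ (Module.Dual ℤ N) (Module.Dual ℤ N)) :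
          Module.Dual ℤ (Module.Dual ℤ N × Module.Dual ℤ N))
        (CliffordAlgebra.contractLeft
          ((Module.Dual.eval ℤ N n).comp (LinearMap.fst ℤ (Module.Dual ℤ N) (Module.Dual ℤ N)) :
            Module.Dual ℤ (Module.Dual ℤ N × Module.Dual ℤ N))
          (extSq r Θ₀)) := by
  classical
  obtain ⟨φ, hφ⟩ := exists_dual_eq_one hn
  obtain ⟨d, e, he0, hrank⟩ := exists_basis_head hφ
  have hrd : r = d + 1 := by rw [hr, hrank]
  subst hrd
  rw [Nat.add_sub_cancel] at hΘn ⊢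
  set m : Basis (Fin (d + 1)) ℤ (Module.Dual ℤ N) := e.dualBasis with hm
  have hme : ∀ i j, m i (e j) = if j = i then 1 else 0 := fun i j => e.dualBasis_apply_self i j
  have hmn : ∀ i, m i n = if (0 : Fin (d+1)) = i then 1 else 0 := by
    intro i; rw [← he0]; exact hme i 0
  set vn : Fin d → Module.Dual ℤ N := fun i => m i.succ with hvn
  set G0 := ExteriorAlgebra.ιMulti ℤ (d + 1) ⇑m with hG0
  set Gn := ExteriorAlgebra.ιMulti ℤ d vn with hGn
  -- span identifications
  have hspan0 : extSubPow (⊤ : Submodule ℤ (Module.Dual ℤ N)) (d + 1) = Submodule.span ℤ {G0} :=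
    extSubPow_eq_span ⇑m (fun _ => Submodule.mem_top) (by rw [m.span_eq])
  have hvnmem : ∀ i, vn i ∈ LinearMap.ker (Module.Dual.eval ℤ N n) := by
    intro i
    rw [LinearMap.mem_ker]
    have : (Module.Dual.eval ℤ N n) (vn i) = vn i n := rfl
    rw [this, hvn]
    have := hmn i.succ
    rwa [if_neg (Fin.succ_ne_zero i).symm] at this
  have hspann : extSubPow (LinearMap.ker (Module.Dual.eval ℤ N n)) d
      = Submodule.span ℤ {Gn} := by
    refine extSubPow_eq_span vn hvnmem ?_
    intro ψ hψ
    have hψn : ψ n = 0 := LinearMap.mem_ker.mp hψ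
    have hexp : ψ = ∑ i, ψ (e i) • m i := by
      conv_lhs => rw [← m.sum_repr ψ]
      exact Finset.sum_congr rfl fun i _ => by rw [e.dualBasis_repr ψ i]
    rw [hexp, Fin.sum_univ_succ, he0, hψn, zero_smul, zero_add]
    exact Submodule.sum_mem _ fun i _ => Submodule.smul_mem _ _
      (Submodule.subset_span ⟨i, rfl⟩)
  -- certificates
  have hF0 : ∀ i k, (Module.Dual.eval ℤ N (e i)) (m k) = if i = k then 1 else 0 := by
    intro i k
    have : (Module.Dual.eval ℤ N (e i)) (m k) = m k (e i) := rfl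
    rw [this, hme k i]
  have hFn : ∀ i k, (Module.Dual.eval ℤ N (e i.succ)) (vn k) = if i = k then 1 else 0 := by
    intro i k
    have : (Module.Dual.eval ℤ N (e i.succ)) (vn k) = m k.succ (e i.succ) := rfl
    rw [this, hme k.succ i.succ]
    simp [Fin.succ_inj]
  obtain ⟨ε0, hε0, hΘ0'⟩ := eq_pm_smul_of_span_eq ⇑m (fun i => Module.Dual.eval ℤ N (e i))
    hF0 Θ₀ (by rw [hΘ₀, hspan0])
  obtain ⟨εn, hεn, hΘn'⟩ := eq_pm_smul_of_span_eq vn (fun i => Module.Dual.eval ℤ N (e i.succ))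
    hFn Θn (by rw [hΘn, hspann])
  rw [hΘ0', hΘn', extSq_pm_smul _ hε0, extSq_pm_smul _ hεn, ← hG0, ← hGn]
  have hm0 : m 0 n = 1 := by rw [hmn 0, if_pos rfl]
  have hms : ∀ i : Fin d, m i.succ n = 0 := by
    intro i; have := hmn i.succ; rwa [if_neg (Fin.succ_ne_zero i).symm] at this
  set F1 : Module.Dual ℤ (Module.Dual ℤ N × Module.Dual ℤ N) :=
    (Module.Dual.eval ℤ N n).comp (LinearMap.fst ℤ (Module.Dual ℤ N) (Module.Dual ℤ N)) with hF1
  set F2 : Module.Dual ℤ (Module.Dual ℤ N × Module.Dual ℤ N) :=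
    (Module.Dual.eval ℤ N n).comp (LinearMap.snd ℤ (Module.Dual ℤ N) (Module.Dual ℤ N)) with hF2
  have hF1ap : ∀ a b : Module.Dual ℤ N, F1 (a, b) = a n := fun a b => rfl
  have hF2ap : ∀ a b : Module.Dual ℤ N, F2 (a, b) = b n := fun a b => rfl
  set w0 : Fin (d + 1) → Module.Dual ℤ N × Module.Dual ℤ N := fun i => (m i, 0) with hw0
  set w2 : Fin (d + 1) → Module.Dual ℤ N × Module.Dual ℤ N := fun i => (0, m i) with hw2
  set X := ExteriorAlgebra.ιMulti ℤ d (fun i => w0 i.succ) with hX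
  set Y := ExteriorAlgebra.ιMulti ℤ (d + 1) w2 with hY
  set Y' := ExteriorAlgebra.ιMulti ℤ d (fun i => w2 i.succ) with hY'
  have hmapl0 : ExteriorAlgebra.map
      (LinearMap.inl ℤ (Module.Dual ℤ N) (Module.Dual ℤ N)) G0
      = ExteriorAlgebra.ιMulti ℤ (d + 1) w0 := by
    rw [hG0, ExteriorAlgebra.map_apply_ιMulti]
    congr 1
  have hmapr0 : ExteriorAlgebra.map
      (LinearMap.inr ℤ (Module.Dual ℤ N) (Module.Dual ℤ N)) G0 = Y := by
    rw [hG0, hY, ExteriorAlgebra.map_apply_ιMulti]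
    congr 1
  have hmapln : ExteriorAlgebra.map
      (LinearMap.inl ℤ (Module.Dual ℤ N) (Module.Dual ℤ N)) Gn = X := by
    rw [hGn, hX, ExteriorAlgebra.map_apply_ιMulti]
    congr 1
  have hmaprn : ExteriorAlgebra.map
      (LinearMap.inr ℤ (Module.Dual ℤ N) (Module.Dual ℤ N)) Gn = Y' := by
    rw [hGn, hY', ExteriorAlgebra.map_apply_ιMulti]
    congr 1
  have hstep1 : CliffordAlgebra.contractLeft F1
      (ExteriorAlgebra.ιMulti ℤ (d + 1) w0 * Y) = X * Y := by
    refine contract_ιMulti_succ_mul F1 w0 Y ?_ ?_ ?_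
    · exact (hF1ap (m 0) 0).trans hm0
    · intro i; exact (hF1ap (m i.succ) 0).trans (hms i)
    · rw [hY]
      exact contract_ιMulti_eq_zero F1 w2 (fun i => (hF1ap 0 (m i)).trans (by simp))
  have hstep2Y : CliffordAlgebra.contractLeft F2 Y = Y' := by
    rw [hY, hY']
    refine contract_ιMulti_succ F2 w2 ?_ ?_
    · exact (hF2ap 0 (m 0)).trans hm0
    · intro i; exact (hF2ap 0 (m i.succ)).trans (hms i)
  have hstep2 : CliffordAlgebra.contractLeft F2 (X * Y) = ((-1 : ℤ) ^ d) • (X * Y') := by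
    rw [hX, contract_ιMulti_mul F2 _ (fun i => (hF2ap (m i.succ) 0).trans (by simp)) Y,
      hstep2Y]
  unfold extSq
  rw [hmapl0, hmapr0, hmapln, hmaprn, map_smul, hstep1, map_smul, hstep2,
    Nat.add_sub_cancel, smul_smul, signs_eq d]
end

section
/- Let N be a lattice with dual M := Hom_ℤ(N,ℤ), and let A := ℤ[N] ⊗_ℤ Λ^* M with product (z^{m}⊗γ)·(z^{m′}⊗γ′) = z^{m+m′}⊗(γ∧γ′). For u = z^{m}⊗γ and u′ = z^{m′}⊗γ′ with γ, γ′ ∈ M, define the Lie bracket [u, u′] := z^{m+m′}⊗(γ(m′)·γ′ − γ′(m)·γ) ∈ ℤ[N]⊗M. Fix n_1, n_2 ∈ N, integers k, ℓ ≥ 0, and α_0,…,α_k, β_0,…,β_ℓ ∈ M; set a_0 := z^{n_1}⊗α_0, a_i := z^0⊗α_i for 1 ≤ i ≤ k, b_0 := z^{n_2}⊗β_0, b_j := z^0⊗β_j for 1 ≤ j ≤ ℓ, α := α_0∧⋯∧α_k and β := β_0∧⋯∧β_ℓ. Then, in A: Σ_{i=0}^{k} Σ_{j=0}^{ℓ}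 (−1)^{i+j}·[a_i, b_j]·a_0⋯â_i⋯a_k·b_0⋯b̂_j⋯b_ℓ = (−1)^k · z^{n_1+n_2} ⊗ ( ι_{n_2}(α)∧β + (−1)^{k+1}·α∧ι_{n_1}(β) ), where hats denote omitted factors. -/
set_option synthInstance.maxHeartbeats 1000000
set_option maxHeartbeats 1000000

open Module

section Aux

lemma eraseIdx_map' {α β : Type*} (f : α → β) : ∀ (l : List α) (n : ℕ),
    (l.map f).eraseIdx n = (l.eraseIdx n).map f := by
  intro l
  induction l with
  | nil => intro n; simp
  | cons h t ih =>
    intro n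
    cases n with
    | zero => simp
    | succ n => simp [List.eraseIdx_cons_succ, ih]

lemma single_list_prod {R G : Type*} [Semiring R] [AddMonoid G] (l : List (G × R)) :
    (l.map fun p => AddMonoidAlgebra.single p.1 p.2).prod
      = AddMonoidAlgebra.single (l.map Prod.fst).sum (l.map Prod.snd).prod := by
  induction l with
  | nil => simp [AddMonoidAlgebra.one_def]
  | cons h t ih => simp [ih, AddMonoidAlgebra.single_mul_single]

lemma sum_eraseIdx_add {M : Type*} [AddCommMonoid M] :
    ∀ (l : List M) (i : ℕ) (h : i < l.length), (l.eraseIdx i).sum + l[i] = l.sum := by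
  intro l
  induction l with
  | nil => intro i h; simp at h
  | cons x t ih =>
    intro i h
    cases i with
    | zero => simp [add_comm]
    | succ i =>
      simp only [List.eraseIdx_cons_succ, List.sum_cons, List.getElem_cons_succ]
      rw [add_assoc, ih i (by simpa using h)]

lemma prod_ofFn_single_eraseIdx {G R : Type*} [AddMonoid G] [Semiring R] {n : ℕ}
    (m : Fin n → G) (e : Fin n → R) (i : ℕ) :
    ((List.ofFn fun t => AddMonoidAlgebra.single (m t) (e t)).eraseIdx i).prod
      = AddMonoidAlgebra.single (((List.ofFn m).eraseIdx i).sum)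
          (((List.ofFn e).eraseIdx i).prod) := by
  have h1 : (List.ofFn fun t => AddMonoidAlgebra.single (m t) (e t))
      = (List.ofFn fun t => (m t, e t)).map (fun p => AddMonoidAlgebra.single p.1 p.2) := by
    rw [List.map_ofFn]; rfl
  rw [h1, eraseIdx_map', single_list_prod, ← eraseIdx_map', ← eraseIdx_map',
    List.map_ofFn, List.map_ofFn]
  rfl

lemma my_single_sum {ι G M : Type*} [Semiring M] [AddMonoid G] (s : Finset ι) (f : ι → M)
    (c : G) :
    ∑ x ∈ s, (AddMonoidAlgebra.single c (f x) : AddMonoidAlgebra M G)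
      = AddMonoidAlgebra.single c (∑ x ∈ s, f x) := by
  classical
  induction s using Finset.induction with
  | empty => simp
  | insert _ _ h ih =>
    rw [Finset.sum_insert h, Finset.sum_insert h, ih]
    exact (AddMonoidAlgebra.single_add _ _ _).symm

variable {R : Type*} [CommRing R] {V : Type*} [AddCommGroup V] [Module R V]

open ExteriorAlgebra

lemma ι_mul_list_prod_aux (x : V) : ∀ (l : List V),
    ι R x * (l.map (ι R)).prod = ((-1 : R) ^ l.length) • ((l.map (ι R)).prod * ι R x) := by
  intro l
  induction l with
  | nil => simp
  | cons y t ih =>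
    have swap : ι R x * ι R y = - (ι R y * ι R x) :=
      eq_neg_of_add_eq_zero_left (ExteriorAlgebra.ι_add_mul_swap x y)
    simp only [List.map_cons, List.prod_cons, List.length_cons, ← mul_assoc, swap,
      neg_mul, pow_succ]
    rw [mul_assoc, ih, mul_smul_comm]
    simp [mul_assoc, mul_comm ((-1:R)^t.length) (-1:R), mul_smul]

lemma contract_list_prod (d : Module.Dual R V) : ∀ (l : List V),
    CliffordAlgebra.contractLeft (Q := (0 : QuadraticForm R V)) d ((l.map (ι R)).prod)
      = ∑ i ∈ Finset.range l.length, ((-1 : R) ^ i * d (l.getD i 0)) •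
          (((l.eraseIdx i).map (ι R)).prod) := by
  intro l
  induction l with
  | nil => simp [CliffordAlgebra.contractLeft_one]
  | cons x t ih =>
    simp only [List.map_cons, List.prod_cons]
    rw [CliffordAlgebra.contractLeft_ι_mul d x, ih]
    simp only [List.length_cons]
    rw [Finset.sum_range_succ']
    simp only [List.getD_cons_zero, List.eraseIdx_cons_zero, pow_zero, one_mul,
      List.getD_cons_succ, List.eraseIdx_cons_succ,
      List.map_cons, List.prod_cons, pow_succ]
    rw [Finset.mul_sum]
    rw [sub_eq_add_neg, ← Finset.sum_neg_distrib, add_comm]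
    congr 1
    refine Finset.sum_congr rfl fun i _ => ?_
    rw [mul_smul_comm, ← neg_smul]
    ring_nf

lemma contract_ofFn_prod (d : Module.Dual R V) {n : ℕ} (f : Fin n → V) :
    CliffordAlgebra.contractLeft (Q := (0 : QuadraticForm R V)) d
        ((List.ofFn fun i => ι R (f i)).prod)
      = ∑ i : Fin n, ((-1 : R) ^ (i : ℕ) * d (f i)) •
          (((List.ofFn fun t => ι R (f t)).eraseIdx (i : ℕ)).prod) := by
  have h1 : (List.ofFn fun i => ι R (f i)) = (List.ofFn f).map (ι R) := by
    rw [List.map_ofFn]; rfl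
  rw [h1, contract_list_prod, List.length_ofFn, ← Fin.sum_univ_eq_sum_range]
  refine Finset.sum_congr rfl fun i _ => ?_
  rw [List.getD_eq_getElem _ _ (by simp), List.getElem_ofFn, ← eraseIdx_map' (ι R) (List.ofFn f),
    List.map_ofFn]

lemma ι_mul_ofFn_eraseIdx (x : V) {n : ℕ} (f : Fin (n + 1) → V) (i : ℕ) (hi : i < n + 1) :
    ι R x * ((List.ofFn fun t => ι R (f t)).eraseIdx i).prod
      = ((-1 : R) ^ n) • (((List.ofFn fun t => ι R (f t)).eraseIdx i).prod * ι R x) := by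
  have h1 : (List.ofFn fun t => ι R (f t)) = (List.ofFn f).map (ι R) := by
    rw [List.map_ofFn]; rfl
  rw [h1, eraseIdx_map', ι_mul_list_prod_aux]
  congr 2
  rw [List.length_eraseIdx]
  simp [hi]

lemma ofFn_prod_succ {n : ℕ} (f : Fin (n + 1) → V) :
    (List.ofFn fun t => ι R (f t)).prod
      = ι R (f 0) * ((List.ofFn fun t => ι R (f t)).eraseIdx 0).prod := by
  rw [List.ofFn_succ]
  simp

end Aux

/-- Contraction `ι_n` on `Λ^* M`, `M := Hom(N, ℤ)`, by a lattice element `n ∈ N`. -/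
noncomputable def ctr {N : Type} [AddCommGroup N] (n : N) :
    ExteriorAlgebra ℤ (Module.Dual ℤ N) →ₗ[ℤ] ExteriorAlgebra ℤ (Module.Dual ℤ N) :=
  CliffordAlgebra.contractLeft (Module.Dual.eval ℤ N n)

/-- **The closed formula for the Schouten–Nijenhuis bracket** (equation (schouten0)).
In `A = ℤ[N] ⊗ Λ^* M` with `a_0 = z^{n_1}⊗α_0`, `a_i = α_i` (`1 ≤ i ≤ k`),
`b_0 = z^{n_2}⊗β_0`, `b_j = β_j` (`1 ≤ j ≤ ℓ`), `α := α_0∧⋯∧α_k`, `β := β_0∧⋯∧β_ℓ`: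
`Σ_{i,j} (−1)^{i+j} [a_i, b_j] a_0⋯â_i⋯a_k b_0⋯b̂_j⋯b_ℓ
  = (−1)^k z^{n_1+n_2} ⊗ (ι_{n_2}(α)∧β + (−1)^{k+1} α∧ι_{n_1}(β))`,
where `[z^m⊗γ, z^{m′}⊗γ′] := z^{m+m′}⊗(γ(m′)γ′ − γ′(m)γ)` is the Lie bracket of
vector fields. -/
theorem schouten_closed_formula (N : Type) [AddCommGroup N] [Module.Free ℤ N]
    [Module.Finite ℤ N]
    (n₁ n₂ : N) (k ℓ : ℕ)
    (α : Fin (k + 1) → Module.Dual ℤ N) (β : Fin (ℓ + 1) → Module.Dual ℤ N)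
    -- the exponents of the generators: `a_0` carries `z^{n_1}`, the others `z^0`
    (m : Fin (k + 1) → N) (hm : m = fun i => if i = 0 then n₁ else 0)
    (m' : Fin (ℓ + 1) → N) (hm' : m' = fun j => if j = 0 then n₂ else 0)
    -- the generators `a_i`, `b_j` as elements of `A = ℤ[N] ⊗ Λ^* M`
    (a : Fin (k + 1) → AddMonoidAlgebra (ExteriorAlgebra ℤ (Module.Dual ℤ N)) N)
    (ha : a = fun i => AddMonoidAlgebra.single (m i) (ExteriorAlgebra.ι ℤ (α i)))
    (b : Fin (ℓ + 1) → AddMonoidAlgebra (ExteriorAlgebra ℤ (Module.Dual ℤ N)) N)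
    (hb : b = fun j => AddMonoidAlgebra.single (m' j) (ExteriorAlgebra.ι ℤ (β j))) :
    (∑ i : Fin (k + 1), ∑ j : Fin (ℓ + 1), ((-1 : ℤ) ^ ((i : ℕ) + (j : ℕ))) •
      (AddMonoidAlgebra.single (m i + m' j)
          (ExteriorAlgebra.ι ℤ ((α i (m' j)) • β j - (β j (m i)) • α i)) *
        ((List.ofFn a).eraseIdx (i : ℕ)).prod *
        ((List.ofFn b).eraseIdx (j : ℕ)).prod)) =
    ((-1 : ℤ) ^ k) • AddMonoidAlgebra.single (n₁ + n₂)
      (ctr n₂ (List.ofFn fun i => ExteriorAlgebra.ι ℤ (α i)).prod *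
          (List.ofFn fun j => ExteriorAlgebra.ι ℤ (β j)).prod +
        ((-1 : ℤ) ^ (k + 1)) •
          ((List.ofFn fun i => ExteriorAlgebra.ι ℤ (α i)).prod *
            ctr n₁ (List.ofFn fun j => ExteriorAlgebra.ι ℤ (β j)).prod)) := by
  classical
  set F : Fin (k + 1) → ExteriorAlgebra ℤ (Module.Dual ℤ N) := fun i =>
    ((List.ofFn fun t => ExteriorAlgebra.ι ℤ (α t)).eraseIdx (i : ℕ)).prod with hF
  set G : Fin (ℓ + 1) → ExteriorAlgebra ℤ (Module.Dual ℤ N) := fun j =>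
    ((List.ofFn fun t => ExteriorAlgebra.ι ℤ (β t)).eraseIdx (j : ℕ)).prod with hG
  have hm0 : m 0 = n₁ := by rw [hm]; simp
  have hm'0 : m' 0 = n₂ := by rw [hm']; simp
  have hms : ∀ i : Fin k, m i.succ = 0 := by intro i; rw [hm]; simp [Fin.succ_ne_zero]
  have hm's : ∀ j : Fin ℓ, m' j.succ = 0 := by intro j; rw [hm']; simp [Fin.succ_ne_zero]
  have hmsum : (List.ofFn m).sum = n₁ := by
    rw [List.sum_ofFn, Fin.sum_univ_succ, hm0]
    simp [hms]
  have hm'sum : (List.ofFn m').sum = n₂ := by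
    rw [List.sum_ofFn, Fin.sum_univ_succ, hm'0]
    simp [hm's]
  have hesumA : ∀ i : Fin (k + 1), ((List.ofFn m).eraseIdx (i : ℕ)).sum = n₁ - m i := by
    intro i
    have h := sum_eraseIdx_add (List.ofFn m) (i : ℕ) (by simp; omega)
    rw [List.getElem_ofFn] at h
    simp only [Fin.eta] at h
    exact eq_sub_of_add_eq (h.trans hmsum)
  have hesumB : ∀ j : Fin (ℓ + 1), ((List.ofFn m').eraseIdx (j : ℕ)).sum = n₂ - m' j := by
    intro j
    have h := sum_eraseIdx_add (List.ofFn m') (j : ℕ) (by simp; omega)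
    rw [List.getElem_ofFn] at h
    simp only [Fin.eta] at h
    exact eq_sub_of_add_eq (h.trans hm'sum)
  have hA : ∀ i : Fin (k + 1), ((List.ofFn a).eraseIdx (i : ℕ)).prod
      = AddMonoidAlgebra.single (n₁ - m i) (F i) := by
    intro i
    rw [ha, prod_ofFn_single_eraseIdx, hesumA]
  have hB : ∀ j : Fin (ℓ + 1), ((List.ofFn b).eraseIdx (j : ℕ)).prod
      = AddMonoidAlgebra.single (n₂ - m' j) (G j) := by
    intro j
    rw [hb, prod_ofFn_single_eraseIdx, hesumB]
  -- reduce to an identity in the exterior algebra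
  have key : ∀ (i : Fin (k + 1)) (j : Fin (ℓ + 1)),
      ((-1 : ℤ) ^ ((i : ℕ) + (j : ℕ))) •
      (AddMonoidAlgebra.single (m i + m' j)
          (ExteriorAlgebra.ι ℤ ((α i (m' j)) • β j - (β j (m i)) • α i)) *
        ((List.ofFn a).eraseIdx (i : ℕ)).prod *
        ((List.ofFn b).eraseIdx (j : ℕ)).prod)
      = AddMonoidAlgebra.single (n₁ + n₂)
          (((-1 : ℤ) ^ ((i : ℕ) + (j : ℕ))) •
            (ExteriorAlgebra.ι ℤ ((α i (m' j)) • β j - (β j (m i)) • α i) * F i * G j)) := by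
    intro i j
    rw [hA, hB, AddMonoidAlgebra.single_mul_single, AddMonoidAlgebra.single_mul_single]
    rw [show m i + m' j + (n₁ - m i) + (n₂ - m' j) = n₁ + n₂ by abel]
    exact AddMonoidAlgebra.smul_single _ _ _
  simp only [key]
  rw [show ∀ v, ((-1 : ℤ) ^ k) • AddMonoidAlgebra.single (n₁ + n₂) v
      = AddMonoidAlgebra.single (n₁ + n₂) (((-1 : ℤ) ^ k) • v) from
    fun v => AddMonoidAlgebra.smul_single _ _ _]
  rw [show (∑ i : Fin (k + 1), ∑ j : Fin (ℓ + 1), AddMonoidAlgebra.single (n₁ + n₂)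
        (((-1 : ℤ) ^ ((i : ℕ) + (j : ℕ))) •
          (ExteriorAlgebra.ι ℤ ((α i (m' j)) • β j - (β j (m i)) • α i) * F i * G j)))
      = AddMonoidAlgebra.single (n₁ + n₂) (∑ i : Fin (k + 1), ∑ j : Fin (ℓ + 1),
          (((-1 : ℤ) ^ ((i : ℕ) + (j : ℕ))) •
          (ExteriorAlgebra.ι ℤ ((α i (m' j)) • β j - (β j (m i)) • α i) * F i * G j))) from by
    rw [← my_single_sum]
    exact Finset.sum_congr rfl fun i _ => my_single_sum _ _ _]
  congr 1
  -- now a pure exterior-algebra identity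
  have hctrA : ctr n₂ (List.ofFn fun i => ExteriorAlgebra.ι ℤ (α i)).prod
      = ∑ i : Fin (k + 1), ((-1 : ℤ) ^ (i : ℕ) * α i n₂) • F i := by
    show CliffordAlgebra.contractLeft (Module.Dual.eval ℤ N n₂) _ = _
    rw [contract_ofFn_prod]
    rfl
  have hctrB : ctr n₁ (List.ofFn fun j => ExteriorAlgebra.ι ℤ (β j)).prod
      = ∑ j : Fin (ℓ + 1), ((-1 : ℤ) ^ (j : ℕ) * β j n₁) • G j := by
    show CliffordAlgebra.contractLeft (Module.Dual.eval ℤ N n₁) _ = _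
    rw [contract_ofFn_prod]
    rfl
  rw [hctrA, hctrB]
  set A : ExteriorAlgebra ℤ (Module.Dual ℤ N) :=
    (List.ofFn fun i => ExteriorAlgebra.ι ℤ (α i)).prod with hAdef
  set B : ExteriorAlgebra ℤ (Module.Dual ℤ N) :=
    (List.ofFn fun j => ExteriorAlgebra.ι ℤ (β j)).prod with hBdef
  have hAsplit : A = ExteriorAlgebra.ι ℤ (α 0) * F 0 := ofFn_prod_succ α
  have hBsplit : B = ExteriorAlgebra.ι ℤ (β 0) * G 0 := ofFn_prod_succ β
  -- expand the summand
  have expand : ∀ (i : Fin (k + 1)) (j : Fin (ℓ + 1)),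
      ((-1 : ℤ) ^ ((i : ℕ) + (j : ℕ))) •
        (ExteriorAlgebra.ι ℤ ((α i (m' j)) • β j - (β j (m i)) • α i) * F i * G j)
      = ((-1 : ℤ) ^ ((i : ℕ) + (j : ℕ)) * (α i (m' j))) •
          (ExteriorAlgebra.ι ℤ (β j) * F i * G j)
        - ((-1 : ℤ) ^ ((i : ℕ) + (j : ℕ)) * (β j (m i))) •
          (ExteriorAlgebra.ι ℤ (α i) * F i * G j) := by
    intro i j
    rw [map_sub, map_smul, map_smul, sub_mul, sub_mul, smul_mul_assoc, smul_mul_assoc,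
      smul_mul_assoc, smul_mul_assoc, smul_sub, smul_smul, smul_smul]
  simp only [expand]
  rw [Finset.sum_congr rfl fun i _ => Finset.sum_sub_distrib _ _, Finset.sum_sub_distrib]
  -- first double sum: only j = 0 contributes
  have hsum1 : ∀ i : Fin (k + 1),
      (∑ j : Fin (ℓ + 1), ((-1 : ℤ) ^ ((i : ℕ) + (j : ℕ)) * (α i (m' j))) •
          (ExteriorAlgebra.ι ℤ (β j) * F i * G j))
      = (((-1 : ℤ) ^ (i : ℕ) * α i n₂) * (-1 : ℤ) ^ k) • (F i * B) := by
    intro i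
    rw [Fin.sum_univ_succ]
    have hz : ∀ j : Fin ℓ, ((-1 : ℤ) ^ ((i : ℕ) + ((j.succ : Fin (ℓ+1)) : ℕ))
          * (α i (m' j.succ))) • (ExteriorAlgebra.ι ℤ (β j.succ) * F i * G j.succ) = 0 := by
      intro j
      rw [hm's j]
      simp
    rw [Finset.sum_congr rfl fun j _ => hz j]
    rw [Finset.sum_const_zero, add_zero, hm'0]
    have hmove : ExteriorAlgebra.ι ℤ (β 0) * F i
        = ((-1 : ℤ) ^ k) • (F i * ExteriorAlgebra.ι ℤ (β 0)) :=
      ι_mul_ofFn_eraseIdx (β 0) α (i : ℕ) i.isLt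
    rw [hmove, smul_mul_assoc, mul_assoc, ← hBsplit, smul_smul]
    simp [mul_comm]
  -- second double sum: only i = 0 contributes
  have hsum2 : (∑ i : Fin (k + 1), ∑ j : Fin (ℓ + 1),
        ((-1 : ℤ) ^ ((i : ℕ) + (j : ℕ)) * (β j (m i))) •
          (ExteriorAlgebra.ι ℤ (α i) * F i * G j))
      = ∑ j : Fin (ℓ + 1), ((-1 : ℤ) ^ (j : ℕ) * β j n₁) • (A * G j) := by
    rw [Fin.sum_univ_succ]
    have hz : ∀ i : Fin k, (∑ j : Fin (ℓ + 1),
        ((-1 : ℤ) ^ (((i.succ : Fin (k+1)) : ℕ) + (j : ℕ)) * (β j (m i.succ))) •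
          (ExteriorAlgebra.ι ℤ (α i.succ) * F i.succ * G j)) = 0 := by
      intro i
      refine Finset.sum_eq_zero fun j _ => ?_
      rw [hms i]
      simp
    rw [Finset.sum_congr rfl fun i _ => hz i, Finset.sum_const_zero, add_zero]
    refine Finset.sum_congr rfl fun j _ => ?_
    rw [hm0, ← hAsplit]
    norm_num
  rw [hsum2, Finset.sum_congr rfl fun i _ => hsum1 i]
  -- now both sides are explicit sums
  rw [smul_add, smul_smul]
  rw [show ((-1 : ℤ) ^ k * (-1 : ℤ) ^ (k + 1)) = -1 by
    rw [← pow_add]; exact Odd.neg_one_pow ⟨k, by ring⟩]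
  rw [neg_smul, one_smul, sub_eq_add_neg]
  congr 1
  · rw [Finset.sum_mul, Finset.smul_sum]
    refine Finset.sum_congr rfl fun i _ => ?_
    rw [smul_mul_assoc, smul_smul]
    rw [show ((-1 : ℤ) ^ (i : ℕ) * α i n₂ * (-1 : ℤ) ^ k)
        = ((-1 : ℤ) ^ k * ((-1 : ℤ) ^ (i : ℕ) * α i n₂)) by ring]
  · rw [Finset.mul_sum, neg_inj]
    refine Finset.sum_congr rfl fun j _ => ?_
    rw [mul_smul_comm]
end

section
/- Let N be a lattice with dual M, A := ℤ[N]⊗_ℤΛ^* M, and l_1(z^n⊗α) := z^n⊗ι_n(α). Then the 2-bracket l_2 agrees with the Schouten–Nijenhuis bracket on A_0 := ker(l_1). Concretely: for all n_1, n_2 ∈ N and homogeneous α, β ∈ Λ^* M with ι_{n_1}(α) = 0 and ι_{n_2}(β) = 0, one has ι_{n_1+n_2}(α∧β) = ι_{n_2}(α)∧β + (−1)^{deg α}·α∧ι_{n_1}(β), and hence l_2(z^{n_1}⊗α, z^{n_2}⊗β) = [z^{n_1}⊗α, z^{n_2}⊗β], where l_2(z^{n_1}⊗α, z^{n_2}⊗β)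 = (−1)^{deg α − 1}·z^{n_1+n_2}⊗ι_{n_1+n_2}(α∧β) and [·,·] is the Schouten–Nijenhuis bracket. -/
set_option synthInstance.maxHeartbeats 1000000
set_option maxHeartbeats 1000000

open Module


open CliffordAlgebra in
lemma contract_mul_homog {R M : Type*} [CommRing R] [AddCommGroup M] [Module R M]
    (d : Module.Dual R M) (n : ℕ) (α : ExteriorAlgebra R M) (hα : α ∈ ⋀[R]^n M)
    (β : ExteriorAlgebra R M) :
    contractLeft (Q := (0 : QuadraticForm R M)) d (α * β) =
      contractLeft (Q := 0) d α * β + ((-1 : R) ^ n) • (α * contractLeft (Q := 0) d β) := by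
  induction hα using Submodule.pow_induction_on_left' with
  | algebraMap r =>
      simp [contractLeft_algebraMap_mul]
  | add x y i hx hy ihx ihy =>
      simp only [add_mul, map_add, ihx, ihy, smul_add]
      abel
  | mem_mul m hm i x hx ih =>
      obtain ⟨v, rfl⟩ := hm
      have hι : (ExteriorAlgebra.ι R : M →ₗ[R] _) = ι (0 : QuadraticForm R M) := rfl
      rw [hι, mul_assoc, contractLeft_ι_mul, contractLeft_ι_mul, ih]
      simp only [sub_mul, mul_add, mul_assoc, smul_mul_assoc, mul_smul_comm, pow_succ,
        mul_sub, smul_sub]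
      module

/-- **Proposition `Schouten`: `l_2` agrees with the Schouten–Nijenhuis bracket on
`A_0 = ker l_1`.**  For homogeneous `α ∈ Λ^{dα} M` and `β ∈ Λ^{dβ} M` with `ι_{n₁}(α) = 0`
and `ι_{n₂}(β) = 0`, one has
`ι_{n₁+n₂}(α∧β) = ι_{n₂}(α)∧β + (−1)^{dα} α∧ι_{n₁}(β)`, hence
`l_2(z^{n₁}⊗α, z^{n₂}⊗β) = [z^{n₁}⊗α, z^{n₂}⊗β]` in `A = ℤ[N]⊗Λ^* M`, where
`l_2(z^{n₁}⊗α, z^{n₂}⊗β) = (−1)^{dα−1} z^{n₁+n₂}⊗ι_{n₁+n₂}(α∧β)` and the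
Schouten–Nijenhuis bracket is
`[z^{n₁}⊗α, z^{n₂}⊗β] = (−1)^{dα−1} z^{n₁+n₂}⊗(ι_{n₂}(α)∧β + (−1)^{dα} α∧ι_{n₁}(β))`. -/
theorem l2_eq_schouten (N : Type) [AddCommGroup N] [Module.Free ℤ N] [Module.Finite ℤ N]
    (n₁ n₂ : N) (dα dβ : ℕ)
    (α β : ExteriorAlgebra ℤ (Module.Dual ℤ N))
    (hα : α ∈ ⋀[ℤ]^dα (Module.Dual ℤ N)) (hβ : β ∈ ⋀[ℤ]^dβ (Module.Dual ℤ N))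
    (h₁ : ctr n₁ α = 0) (h₂ : ctr n₂ β = 0) :
    ctr (n₁ + n₂) (α * β) = ctr n₂ α * β + ((-1 : ℤ) ^ dα) • (α * ctr n₁ β) ∧
    ((-1 : ℤ) ^ (dα + 1)) •
        AddMonoidAlgebra.single (M := N) (n₁ + n₂) (ctr (n₁ + n₂) (α * β)) =
      ((-1 : ℤ) ^ (dα + 1)) •
        AddMonoidAlgebra.single (M := N) (n₁ + n₂)
          (ctr n₂ α * β + ((-1 : ℤ) ^ dα) • (α * ctr n₁ β)) := by
  have key : ∀ n : N, ∀ γ, ctr n (α * γ) = ctr n α * γ + ((-1 : ℤ) ^ dα) • (α * ctr n γ) :=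
    fun n γ => contract_mul_homog _ dα α hα γ
  have hadd : ctr (n₁ + n₂) (α * β) = ctr n₁ (α * β) + ctr n₂ (α * β) := by
    simp only [ctr, map_add, LinearMap.add_apply]
  have h : ctr (n₁ + n₂) (α * β) = ctr n₂ α * β + ((-1 : ℤ) ^ dα) • (α * ctr n₁ β) := by
    rw [hadd, key n₁ β, key n₂ β, h₁, h₂]
    simp
    exact add_comm _ _
  exact ⟨h, by rw [h]⟩
end

section
/- Let N be a lattice with dual M, A := ℤ[N]⊗_ℤΛ^* M, and δ := l_1, i.e. δ(z^n⊗α) = z^n⊗ι_n(α). Then (A, δ) is a Batalin–Vilkovisky algebra: δ lowers the degree deg by 1, δ∘δ = 0, and for all homogeneous a, b, c ∈ A the seven-term relation holds: δ(abc) = δ(ab)·c + (−1)^{deg a}·a·δ(bc) + (−1)^{deg b·(deg a + 1)}·b·δ(ac) − δ(a)·b·c − (−1)^{deg a}·a·δ(b)·c − (−1)^{deg a + deg b}·a·b·δ(c). -/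
set_option synthInstance.maxHeartbeats 1000000
set_option maxHeartbeats 1000000

open Module

/-- The operator `l_1 = δ` on `A = ℤ[N] ⊗ Λ^* M`: `l_1(z^n ⊗ α) = z^n ⊗ ι_n(α)`. -/
noncomputable def lOne {N : Type} [AddCommGroup N]
    (x : AddMonoidAlgebra (ExteriorAlgebra ℤ (Module.Dual ℤ N)) N) :
    AddMonoidAlgebra (ExteriorAlgebra ℤ (Module.Dual ℤ N)) N :=
  Finsupp.sum x.coeff fun n a => AddMonoidAlgebra.single n (ctr n a)

open ExteriorAlgebra

section Aux

variable {M : Type*} [AddCommGroup M] [Module ℤ M]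

local notation "F" => CliffordAlgebra.contractLeft (R := ℤ) (M := M)

lemma mul_mem_ext {p q : ℕ} {x y : ExteriorAlgebra ℤ M}
    (hx : x ∈ ⋀[ℤ]^p M) (hy : y ∈ ⋀[ℤ]^q M) : x * y ∈ ⋀[ℤ]^(p+q) M := by
  have := Submodule.mul_mem_mul hx hy
  rwa [← pow_add] at this

lemma ctr_key (f : Module.Dual ℤ M) {p : ℕ} {x : ExteriorAlgebra ℤ M}
    (hx : x ∈ ⋀[ℤ]^p M) :
    F f x ∈ ⋀[ℤ]^(p-1) M ∧ (p = 0 → F f x = 0) ∧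
    ∀ y, F f (x * y) = F f x * y + ((-1:ℤ)^p) • (x * F f y) := by
  induction hx using Submodule.pow_induction_on_left' with
  | algebraMap r =>
    have h0 : F f (algebraMap ℤ (CliffordAlgebra (0 : QuadraticForm ℤ M)) r) = 0 :=
      CliffordAlgebra.contractLeft_algebraMap _ _ _
    refine ⟨?_, fun _ => h0, fun y => ?_⟩
    · rw [h0]; exact zero_mem _
    · rw [CliffordAlgebra.contractLeft_algebraMap_mul, h0, zero_mul, zero_add,
        pow_zero, one_smul]
  | add x y i hx hy ihx ihy =>
    refine ⟨by rw [map_add]; exact add_mem ihx.1 ihy.1, fun h0 => ?_, fun z => ?_⟩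
    · rw [map_add, ihx.2.1 h0, ihy.2.1 h0, add_zero]
    · rw [add_mul, map_add, ihx.2.2 z, ihy.2.2 z]
      simp only [map_add, add_mul, smul_add]
      abel
  | mem_mul m hm i x hx ih =>
    obtain ⟨v, rfl⟩ := hm
    have hi : F f (ι ℤ v * x) = f v • x - ι ℤ v * F f x :=
      CliffordAlgebra.contractLeft_ι_mul f v x
    have hmem : F f (ι ℤ v * x) ∈ ⋀[ℤ]^(i + 1 - 1) M := by
      rw [hi]
      simp only [Nat.add_sub_cancel]
      refine sub_mem (Submodule.smul_mem _ _ hx) ?_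
      rcases i with - | j
      · rw [ih.2.1 rfl, mul_zero]; exact zero_mem _
      · have h1 : (ι ℤ v : ExteriorAlgebra ℤ M) ∈ ⋀[ℤ]^1 M := by
          show (ι ℤ) v ∈ LinearMap.range (ι ℤ (M := M)) ^ 1
          rw [pow_one]; exact LinearMap.mem_range_self _ v
        have := mul_mem_ext h1 ih.1
        simpa [Nat.succ_sub_one, add_comm] using this
    refine ⟨hmem, fun h0 => (Nat.succ_ne_zero i h0).elim, fun y => ?_⟩
    have e1 : F f (ι ℤ v * x * y) = f v • (x * y) - ι ℤ v * F f (x * y) := by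
      rw [mul_assoc]; exact CliffordAlgebra.contractLeft_ι_mul f v (x*y)
    rw [e1, ih.2.2 y, hi]
    simp only [mul_add, mul_sub, mul_smul_comm, smul_mul_assoc, sub_mul, smul_sub,
      smul_add, smul_smul, pow_succ, mul_assoc]
    module

lemma iota_mul_comm {q : ℕ} {y : ExteriorAlgebra ℤ M} (hy : y ∈ ⋀[ℤ]^q M) (m : M) :
    ι ℤ m * y = ((-1:ℤ)^q) • (y * ι ℤ m) := by
  induction hy using Submodule.pow_induction_on_left' with
  | algebraMap r =>
    rw [pow_zero, one_smul]
    exact (Algebra.commutes r _).symm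
  | add x y i hx hy ihx ihy => rw [mul_add, add_mul, ihx, ihy, smul_add]
  | mem_mul m' hm' i x hx ih =>
    obtain ⟨v, rfl⟩ := hm'
    have anti : ι ℤ m * ι ℤ v = -(ι ℤ v * ι ℤ m) :=
      eq_neg_of_add_eq_zero_left (ExteriorAlgebra.ι_add_mul_swap m v)
    rw [← mul_assoc, anti, neg_mul, mul_assoc, ih, pow_succ]
    simp only [mul_smul_comm, smul_smul, mul_assoc]
    module

lemma grade_comm {p q : ℕ} {x y : ExteriorAlgebra ℤ M}
    (hx : x ∈ ⋀[ℤ]^p M) (hy : y ∈ ⋀[ℤ]^q M) :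
    x * y = ((-1:ℤ)^(p*q)) • (y * x) := by
  induction hx using Submodule.pow_induction_on_left' with
  | algebraMap r =>
    rw [Nat.zero_mul, pow_zero, one_smul]
    exact Algebra.commutes r y
  | add x x' i hx hx' ihx ihx' => rw [add_mul, mul_add, ihx, ihx', smul_add]
  | mem_mul m hm i x hx ih =>
    obtain ⟨v, rfl⟩ := hm
    rw [mul_assoc, ih, mul_smul_comm, ← mul_assoc, iota_mul_comm hy v,
      smul_mul_assoc, smul_smul, ← pow_add, mul_assoc,
      show i * q + q = (i+1) * q by ring]

lemma swap_ctr (f : Module.Dual ℤ M) {da db : ℕ} {α β : ExteriorAlgebra ℤ M}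
    (hα : α ∈ ⋀[ℤ]^da M) (hβ : β ∈ ⋀[ℤ]^db M) :
    ((-1:ℤ)^(db*(da+1))) • (β * F f α) = F f α * β := by
  rcases da with - | p
  · rw [(ctr_key f hα).2.1 rfl, mul_zero, zero_mul, smul_zero]
  · have h1 : F f α ∈ ⋀[ℤ]^p M := by
      simpa [Nat.succ_sub_one] using (ctr_key f hα).1
    rw [grade_comm h1 hβ,
      show ((-1:ℤ))^(db*(p+1+1)) = (-1)^(p*db) from by
        rw [show db*(p+1+1) = p*db + 2*db by ring, pow_add, pow_mul]; norm_num]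

lemma seven (f g h : Module.Dual ℤ M) {da db dc : ℕ}
    {α β γ : ExteriorAlgebra ℤ M}
    (hα : α ∈ ⋀[ℤ]^da M) (hβ : β ∈ ⋀[ℤ]^db M) (hγ : γ ∈ ⋀[ℤ]^dc M) :
    F (f+g+h) (α*β*γ) =
      F (f+g) (α*β) * γ + ((-1:ℤ)^da) • (α * F (g+h) (β*γ)) +
        ((-1:ℤ)^(db*(da+1))) • (β * F (f+h) (α*γ)) -
        F f α * β * γ - ((-1:ℤ)^da) • (α * F g β * γ) -
        ((-1:ℤ)^(da+db)) • (α * β * F h γ) := by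
  set k := db*(da+1) with hk
  have hαβ : α * β ∈ ⋀[ℤ]^(da+db) M := mul_mem_ext hα hβ
  have leib3 : ∀ u : Module.Dual ℤ M, F u (α*β*γ) =
      F u α * β * γ + ((-1:ℤ)^da) • (α * F u β * γ) +
        ((-1:ℤ)^(da+db)) • (α * β * F u γ) := by
    intro u
    rw [(ctr_key u hαβ).2.2 γ, (ctr_key u hα).2.2 β]
    simp only [add_mul, smul_mul_assoc]
  have leib2β : ∀ u : Module.Dual ℤ M, F u (β*γ) =
      F u β * γ + ((-1:ℤ)^db) • (β * F u γ) := fun u => (ctr_key u hβ).2.2 γ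
  have leib2α : ∀ u : Module.Dual ℤ M, F u (α*γ) =
      F u α * γ + ((-1:ℤ)^da) • (α * F u γ) := fun u => (ctr_key u hα).2.2 γ
  have leib2αβ : ∀ u : Module.Dual ℤ M, F u (α*β) =
      F u α * β + ((-1:ℤ)^da) • (α * F u β) := fun u => (ctr_key u hα).2.2 β
  have s1 : ∀ u : Module.Dual ℤ M,
      ((-1:ℤ)^k) • (β * F u α * γ) = F u α * β * γ := by
    intro u
    rw [hk, ← smul_mul_assoc, swap_ctr u hα hβ]
  have s2 : ∀ u : Module.Dual ℤ M,
      ((-1:ℤ)^k) • (((-1:ℤ)^da) • (β * α * F u γ)) =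
        ((-1:ℤ)^(da+db)) • (α * β * F u γ) := by
    intro u
    rw [hk, grade_comm hβ hα, smul_mul_assoc, smul_smul, smul_smul,
      ← pow_add, ← pow_add,
      show db*(da+1) + da + db*da = (da + db) + 2*(da*db) by ring,
      pow_add (-1 : ℤ) (da+db), pow_mul]
    norm_num
  simp only [map_add, LinearMap.add_apply, leib3, leib2β, leib2α, leib2αβ,
    mul_add, smul_add, add_mul, smul_mul_assoc, mul_smul_comm, ← mul_assoc]
  rw [s1 f, s1 h, s2 f, s2 h]
  module

end Aux

section Main

variable {N : Type} [AddCommGroup N]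

lemma ctr_eq (n : N) (x : ExteriorAlgebra ℤ (Module.Dual ℤ N)) :
    ctr n x = CliffordAlgebra.contractLeft (Module.Dual.eval ℤ N n) x := rfl

lemma lOne_single (n : N) (x : ExteriorAlgebra ℤ (Module.Dual ℤ N)) :
    lOne (AddMonoidAlgebra.single n x) = AddMonoidAlgebra.single n (ctr n x) := by
  unfold lOne
  rw [AddMonoidAlgebra.coeff_single, Finsupp.sum_single_index]
  simp

lemma lOne_add (u v : AddMonoidAlgebra (ExteriorAlgebra ℤ (Module.Dual ℤ N)) N) :
    lOne (u + v) = lOne u + lOne v := by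
  unfold lOne
  rw [AddMonoidAlgebra.coeff_add, Finsupp.sum_add_index']
  · intro a; simp
  · intro a b₁ b₂
    rw [map_add]
    exact AddMonoidAlgebra.single_add a _ _

lemma zsmul_single (c : ℤ) (n : N) (x : ExteriorAlgebra ℤ (Module.Dual ℤ N)) :
    c • AddMonoidAlgebra.single n x = AddMonoidAlgebra.single n (c • x) :=
  AddMonoidAlgebra.smul_single c n x

lemma single_add' (n : N) (x y : ExteriorAlgebra ℤ (Module.Dual ℤ N)) :
    AddMonoidAlgebra.single n (x + y) =
      AddMonoidAlgebra.single n x + AddMonoidAlgebra.single n y :=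
  AddMonoidAlgebra.single_add n x y

lemma single_sub' (n : N) (x y : ExteriorAlgebra ℤ (Module.Dual ℤ N)) :
    AddMonoidAlgebra.single n (x - y) =
      AddMonoidAlgebra.single n x - AddMonoidAlgebra.single n y :=
  AddMonoidAlgebra.single_sub n x y

lemma lOne_zero : lOne (0 : AddMonoidAlgebra (ExteriorAlgebra ℤ (Module.Dual ℤ N)) N) = 0 := by
  unfold lOne
  rw [AddMonoidAlgebra.coeff_zero]
  exact Finsupp.sum_zero_index

end Main

/-- **Proposition `BVprop` (first half): `(A, l_1)` is a Batalin–Vilkovisky algebra.**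
On `A = ℤ[N] ⊗ Λ^* M` the operator `δ = l_1` lowers the degree by `1`, satisfies
`δ ∘ δ = 0`, and satisfies the seven-term relation
`δ(abc) = δ(ab)c + (−1)^{deg a} a δ(bc) + (−1)^{deg b (deg a+1)} b δ(ac)
  − δ(a)bc − (−1)^{deg a} a δ(b) c − (−1)^{deg a + deg b} a b δ(c)`
for all homogeneous `a, b, c ∈ A`. -/
theorem bv_algebra (N : Type) [AddCommGroup N] [Module.Free ℤ N] [Module.Finite ℤ N] :
    -- δ lowers the degree `deg` by 1: on a homogeneous element `z^n ⊗ x` of degree `d`,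
    -- `δ(z^n ⊗ x) = z^n ⊗ ι_n(x)` is homogeneous of degree `d − 1`
    (∀ (n : N) (d : ℕ) (x : ExteriorAlgebra ℤ (Module.Dual ℤ N)),
      x ∈ ⋀[ℤ]^d (Module.Dual ℤ N) →
        lOne (AddMonoidAlgebra.single n x) = AddMonoidAlgebra.single n (ctr n x) ∧
        ctr n x ∈ ⋀[ℤ]^(d - 1) (Module.Dual ℤ N)) ∧
    -- δ ∘ δ = 0
    (∀ x : AddMonoidAlgebra (ExteriorAlgebra ℤ (Module.Dual ℤ N)) N,
      lOne (lOne x) = 0) ∧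
    -- the seven-term relation for homogeneous a = z^{na}⊗αa, b, c
    (∀ (na nb nc : N) (da db dc : ℕ)
      (αa αb αc : ExteriorAlgebra ℤ (Module.Dual ℤ N)),
      αa ∈ ⋀[ℤ]^da (Module.Dual ℤ N) → αb ∈ ⋀[ℤ]^db (Module.Dual ℤ N) →
      αc ∈ ⋀[ℤ]^dc (Module.Dual ℤ N) →
      ∀ (a b c : AddMonoidAlgebra (ExteriorAlgebra ℤ (Module.Dual ℤ N)) N),
        a = AddMonoidAlgebra.single na αa → b = AddMonoidAlgebra.single nb αb →
        c = AddMonoidAlgebra.single nc αc →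
        lOne (a * b * c) =
          lOne (a * b) * c + ((-1 : ℤ) ^ da) • (a * lOne (b * c)) +
            ((-1 : ℤ) ^ (db * (da + 1))) • (b * lOne (a * c)) -
            lOne a * b * c - ((-1 : ℤ) ^ da) • (a * lOne b * c) -
            ((-1 : ℤ) ^ (da + db)) • (a * b * lOne c)) := by
  refine ⟨?_, ?_, ?_⟩
  · intro n d x hx
    refine ⟨lOne_single n x, ?_⟩
    rw [ctr_eq]
    exact (ctr_key (Module.Dual.eval ℤ N n) hx).1
  · intro x
    induction x using AddMonoidAlgebra.induction with
    | zero => rw [lOne_zero, lOne_zero]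
    | single_add n a f hn ha ih =>
      rw [lOne_add, lOne_single, lOne_add, lOne_single, ih, add_zero, ctr_eq, ctr_eq,
        CliffordAlgebra.contractLeft_contractLeft]
      simp
  · intro na nb nc da db dc αa αb αc hαa hαb hαc a b c ha hb hc
    subst ha hb hc
    have key := seven (Module.Dual.eval ℤ N na) (Module.Dual.eval ℤ N nb)
      (Module.Dual.eval ℤ N nc) hαa hαb hαc
    simp only [AddMonoidAlgebra.single_mul_single, lOne_single]
    rw [show na + (nb + nc) = na + nb + nc from (add_assoc na nb nc).symm,
      show nb + (na + nc) = na + nb + nc by abel]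
    simp only [zsmul_single]
    simp only [← single_add', ← single_sub']
    refine congrArg (AddMonoidAlgebra.single (na + nb + nc)) ?_
    simp only [ctr_eq, map_add, LinearMap.add_apply] at key ⊢
    convert key using 2
end

section
/- Let N be a lattice with dual M. Fix k ≥ 1, elements n_1,…,n_k ∈ N, and homogeneous elements α_1,…,α_k ∈ Λ^* M; set n := n_1 + ⋯ + n_k. Fix 1 ≤ i ≤ k and j := k + 1 − i, and for an (i,j)-unshuffle σ set n_σ := n_{σ(1)} + ⋯ + n_{σ(i)}. Then Σ_{σ∈UnShuff(i,j)} Σ_{ℓ=1}^{i} (−1)^{deg α_1 + ⋯ + deg α_{σ(ℓ)−1}} · α_1∧⋯∧ι_{n_σ}(α_{σ(ℓ)})∧⋯∧α_k (where the contraction ι_{n_σ} replaces the factor in position σ(ℓ)) equals C(k−2, i−2)·ι_n(α_1∧⋯∧α_k) + ( C(k−1, i−1) − C(k−2, i−2) )·Σ_{ℓ=1}^{k} (−1)^{deg α_1 + ⋯ + deg α_{ℓ−1}}·α_1∧⋯∧ι_{n_ℓ}(α_ℓ)∧⋯∧α_k, where C(·,·) denotes the binomial coefficient, with C(a,b) :=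 0 for b < 0 or b > a. -/
set_option synthInstance.maxHeartbeats 1000000
set_option maxHeartbeats 1000000

open Module Finset

section Alg
variable {N : Type} [AddCommGroup N]

lemma ctr_ι_mul (v : N) (m : Module.Dual ℤ N) (x : ExteriorAlgebra ℤ (Module.Dual ℤ N)) :
    ctr v (ExteriorAlgebra.ι ℤ m * x) = m v • x - ExteriorAlgebra.ι ℤ m * ctr v x := by
  simpa [ctr] using CliffordAlgebra.contractLeft_ι_mul (Q := (0 : QuadraticForm ℤ (Module.Dual ℤ N))) (d := Module.Dual.eval ℤ N v) m x

lemma ctr_mul_left (v : N) (p : ℕ)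
    (x y : ExteriorAlgebra ℤ (Module.Dual ℤ N)) (hx : x ∈ ⋀[ℤ]^p (Module.Dual ℤ N)) :
    ctr v (x * y) = ctr v x * y + ((-1:ℤ)^p) • (x * ctr v y) := by
  induction hx using Submodule.pow_induction_on_left' with
  | algebraMap r =>
      rw [ctr, CliffordAlgebra.contractLeft_algebraMap_mul, CliffordAlgebra.contractLeft_algebraMap]
      simp [Algebra.smul_def, mul_assoc, Algebra.commutes]
  | add a b i ha hb iha ihb =>
      rw [add_mul, map_add, iha, ihb, map_add, add_mul, add_mul, smul_add]
      abel
  | mem_mul m hm i a ha ih =>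
      obtain ⟨w, rfl⟩ := hm
      rw [mul_assoc, ctr_ι_mul, ctr_ι_mul, ih, mul_add]
      simp only [mul_smul_comm, smul_mul_assoc, pow_succ, mul_assoc, mul_neg, mul_one, neg_smul, add_mul, sub_mul, neg_mul]
      abel

lemma ofFn_update {A : Type*} {k : ℕ} (α : Fin k → A) (s : Fin k) (x : A) :
    List.ofFn (Function.update α s x) = (List.ofFn α).set s x := by
  have h : (List.finRange k).idxOf s < k := by
    simpa using List.idxOf_lt_length_iff.2 (List.mem_finRange s)
  simp [List.ofFn_eq_map, (List.nodup_finRange k).map_update, List.idxOf_finRange]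

lemma update_comp_succ {A : Type*} {k : ℕ} (α : Fin (k+1) → A) (x : A) (q : Fin k) :
    (Function.update α 0 x) q.succ = α q.succ := by
  simp [Function.update, Fin.succ_ne_zero]

lemma exp_succ {k : ℕ} (d : Fin (k+1) → ℕ) (ℓ : Fin k) :
    (∑ q ∈ (univ : Finset (Fin (k+1))).filter (fun q => q < ℓ.succ), d q)
      = d 0 + ∑ q ∈ (univ : Finset (Fin k)).filter (fun q => q < ℓ), d q.succ := by
  rw [Finset.sum_filter, Fin.sum_univ_succ, Finset.sum_filter]
  simp [Fin.succ_pos, Fin.succ_lt_succ_iff]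

lemma ctr_ofFn_prod (v : N) : ∀ {k : ℕ} (d : Fin k → ℕ)
    (α : Fin k → ExteriorAlgebra ℤ (Module.Dual ℤ N)),
    (∀ t, α t ∈ ⋀[ℤ]^(d t) (Module.Dual ℤ N)) →
    ctr v (List.ofFn α).prod =
      ∑ ℓ : Fin k, ((-1:ℤ) ^ (∑ q ∈ univ.filter (fun q => q < ℓ), d q)) •
        (List.ofFn (Function.update α ℓ (ctr v (α ℓ)))).prod := by
  intro k
  induction k with
  | zero => intro d α hα; simp [ctr, CliffordAlgebra.contractLeft_one]
  | succ k ih =>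
    intro d α hα
    rw [List.ofFn_succ, List.prod_cons,
      ctr_mul_left v (d 0) _ _ (hα 0),
      ih (fun q => d q.succ) (fun q => α q.succ) (fun q => hα q.succ),
      Fin.sum_univ_succ]
    congr 1
    · rw [List.ofFn_succ, List.prod_cons]
      have h0 : ((univ : Finset (Fin (k+1))).filter (fun q => q < 0)) = ∅ := by
        ext q; simp
      rw [h0]
      simp only [Finset.sum_empty, pow_zero, one_smul, Function.update_self]
      have h1 : (fun i : Fin k => Function.update α 0 (ctr v (α 0)) i.succ)
          = fun i : Fin k => α i.succ := funext (update_comp_succ α _)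
      rw [h1]
    · rw [Finset.mul_sum, Finset.smul_sum]
      congr 1
      funext ℓ
      rw [exp_succ, pow_add, mul_smul_comm, smul_smul]
      congr 2
      rw [List.ofFn_succ, List.prod_cons]
      have : Function.update α ℓ.succ (ctr v (α ℓ.succ)) 0 = α 0 := by
        simp [Function.update, (Fin.succ_ne_zero ℓ).symm]
      rw [this]
      have h2 : (fun i : Fin k => Function.update α ℓ.succ (ctr v (α ℓ.succ)) i.succ)
          = Function.update (fun q : Fin k => α q.succ) ℓ (ctr v (α ℓ.succ)) := by
        funext q
        rcases eq_or_ne q ℓ with rfl | hq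
        · simp
        · rw [Function.update_of_ne (fun h => hq (Fin.succ_injective _ h)),
            Function.update_of_ne hq]
      rw [h2]

lemma ctr_sum {ι : Type*} (u : Finset ι) (f : ι → N)
    (x : ExteriorAlgebra ℤ (Module.Dual ℤ N)) :
    ctr (∑ t ∈ u, f t) x = ∑ t ∈ u, ctr (f t) x := by
  simp [ctr, map_sum, LinearMap.sum_apply]

lemma prod_ofFn_update_sum {k : ℕ} (α : Fin k → ExteriorAlgebra ℤ (Module.Dual ℤ N))
    (s : Fin k) {ι : Type*} (u : Finset ι) (g : ι → ExteriorAlgebra ℤ (Module.Dual ℤ N)) :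
    (List.ofFn (Function.update α s (∑ t ∈ u, g t))).prod
      = ∑ t ∈ u, (List.ofFn (Function.update α s (g t))).prod := by
  simp only [ofFn_update, List.prod_set, List.length_ofFn, s.isLt, if_true,
    Finset.sum_mul, Finset.mul_sum]

end Alg

section Comb
variable {k i : ℕ}

lemma card_blk (hik : i ≤ k) :
    ((univ : Finset (Fin k)).filter (fun ℓ : Fin k => (ℓ:ℕ) < i)).card = i := by
  have : (univ : Finset (Fin k)).filter (fun ℓ : Fin k => (ℓ:ℕ) < i)
      = (univ : Finset (Fin i)).map (Fin.castLEEmb hik) := by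
    ext q
    simp only [mem_filter, mem_univ, true_and, mem_map, Fin.castLEEmb, Function.Embedding.coeFn_mk]
    constructor
    · intro h; exact ⟨⟨q, h⟩, rfl⟩
    · rintro ⟨x, rfl⟩; exact x.isLt
  rw [this, card_map, card_univ, Fintype.card_fin]

lemma compl_card (hik : i ≤ k) {S : Finset (Fin k)} (h : S.card = i) : Sᶜ.card = k - i := by
  rw [Finset.card_compl, h, Fintype.card_fin]

noncomputable def unshufFun (hik : i ≤ k) (S : Finset (Fin k)) (h : S.card = i) :
    Fin k → Fin k :=
  fun ℓ => if hl : (ℓ:ℕ) < i then S.orderEmbOfFin h ⟨ℓ, hl⟩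
    else Sᶜ.orderEmbOfFin (compl_card hik h) ⟨(ℓ:ℕ) - i, by have := ℓ.isLt; omega⟩

lemma unshufFun_inj (hik : i ≤ k) (S : Finset (Fin k)) (h : S.card = i) :
    Function.Injective (unshufFun hik S h) := by
  intro a b hab
  unfold unshufFun at hab
  split_ifs at hab with h1 h2 h2
  · have := (S.orderEmbOfFin h).injective hab
    simpa [Fin.ext_iff] using congrArg Fin.val this
  · exfalso
    have h3 := S.orderEmbOfFin_mem h ⟨a, h1⟩
    rw [hab] at h3
    exact (Finset.mem_compl.1 (Sᶜ.orderEmbOfFin_mem (compl_card hik h) _)) h3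
  · exfalso
    have h3 := S.orderEmbOfFin_mem h ⟨b, h2⟩
    rw [← hab] at h3
    exact (Finset.mem_compl.1 (Sᶜ.orderEmbOfFin_mem (compl_card hik h) _)) h3
  · have := (Sᶜ.orderEmbOfFin (compl_card hik h)).injective hab
    have h4 := congrArg Fin.val this
    simp only at h4
    have := a.isLt; have := b.isLt
    exact Fin.ext (by omega)

noncomputable def toPerm (hik : i ≤ k) (S : Finset (Fin k)) : Equiv.Perm (Fin k) :=
  if h : S.card = i then
    Equiv.ofBijective _ (Finite.injective_iff_bijective.1 (unshufFun_inj hik S h))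
  else 1

lemma toPerm_apply (hik : i ≤ k) {S : Finset (Fin k)} (h : S.card = i) (ℓ : Fin k) :
    toPerm hik S ℓ = unshufFun hik S h ℓ := by
  rw [toPerm, dif_pos h]; rfl

lemma toPerm_mem (hik : i ≤ k) {S : Finset (Fin k)} (h : S.card = i) :
    (∀ a b : Fin k, a < b → (b : ℕ) < i → toPerm hik S a < toPerm hik S b) ∧
    (∀ a b : Fin k, a < b → i ≤ (a : ℕ) → toPerm hik S a < toPerm hik S b) := by
  constructor
  · intro a b hab hb
    have ha : (a:ℕ) < i := lt_trans hab hb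
    rw [toPerm_apply hik h, toPerm_apply hik h]
    simp only [unshufFun]
    rw [dif_pos ha, dif_pos hb]
    exact (S.orderEmbOfFin h).strictMono (by exact hab)
  · intro a b hab ha
    have hb : i ≤ (b:ℕ) := le_trans ha (le_of_lt hab)
    rw [toPerm_apply hik h, toPerm_apply hik h]
    simp only [unshufFun]
    rw [dif_neg (not_lt.2 ha), dif_neg (not_lt.2 hb)]
    exact (Sᶜ.orderEmbOfFin (compl_card hik h)).strictMono
      (by simp only [Fin.mk_lt_mk]; omega)

lemma toPerm_image (hik : i ≤ k) {S : Finset (Fin k)} (h : S.card = i) :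
    ((univ : Finset (Fin k)).filter (fun ℓ : Fin k => (ℓ:ℕ) < i)).image (toPerm hik S) = S := by
  apply Finset.eq_of_subset_of_card_le
  · intro x hx
    obtain ⟨ℓ, hℓ, rfl⟩ := Finset.mem_image.1 hx
    have hl : (ℓ:ℕ) < i := (Finset.mem_filter.1 hℓ).2
    rw [toPerm_apply hik h]
    simp only [unshufFun]
    rw [dif_pos hl]
    exact S.orderEmbOfFin_mem h _
  · rw [Finset.card_image_of_injective _ (toPerm hik S).injective, card_blk hik, h]

lemma image_card (hik : i ≤ k) (σ : Equiv.Perm (Fin k)) :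
    (((univ : Finset (Fin k)).filter (fun ℓ : Fin k => (ℓ:ℕ) < i)).image σ).card = i := by
  rw [Finset.card_image_of_injective _ σ.injective, card_blk hik]

lemma toPerm_image_eq (hik : i ≤ k) (σ : Equiv.Perm (Fin k))
    (h1 : ∀ a b : Fin k, a < b → (b : ℕ) < i → σ a < σ b)
    (h2 : ∀ a b : Fin k, a < b → i ≤ (a : ℕ) → σ a < σ b) :
    toPerm hik (((univ : Finset (Fin k)).filter (fun ℓ : Fin k => (ℓ:ℕ) < i)).image σ) = σ := by
  set S := ((univ : Finset (Fin k)).filter (fun ℓ : Fin k => (ℓ:ℕ) < i)).image σ with hS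
  have h : S.card = i := image_card hik σ
  have hg : (fun x : Fin i => σ (Fin.castLE hik x)) = S.orderEmbOfFin h := by
    apply Finset.orderEmbOfFin_unique
    · intro x
      exact Finset.mem_image.2 ⟨Fin.castLE hik x, Finset.mem_filter.2 ⟨mem_univ _, x.isLt⟩, rfl⟩
    · intro x y hxy
      exact h1 _ _ (by rw [Fin.lt_def]; exact hxy) (y.isLt)
  have hg' : (fun x : Fin (k - i) => σ ⟨i + (x:ℕ), by have := x.isLt; omega⟩)
      = Sᶜ.orderEmbOfFin (compl_card hik h) := by
    apply Finset.orderEmbOfFin_unique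
    · intro x
      rw [Finset.mem_compl]
      intro hmem
      obtain ⟨ℓ, hℓ, heq⟩ := Finset.mem_image.1 hmem
      have : (⟨i + (x:ℕ), by have := x.isLt; omega⟩ : Fin k) = ℓ := σ.injective heq.symm
      have hl : (ℓ:ℕ) < i := (Finset.mem_filter.1 hℓ).2
      rw [← this] at hl
      have h5 : i + (x:ℕ) < i := hl
      omega
    · intro x y hxy
      exact h2 _ _ (by simp only [Fin.mk_lt_mk]; omega) (Nat.le_add_right i x)
  ext ℓ
  rcases lt_or_ge (ℓ:ℕ) i with hl | hl
  · rw [toPerm_apply hik h]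
    simp only [unshufFun]
    rw [dif_pos hl, ← hg]
    have h6 : σ (Fin.castLE hik ⟨(ℓ:ℕ), hl⟩) = σ ℓ := congrArg σ (Fin.ext rfl)
    exact congrArg Fin.val h6
  · rw [toPerm_apply hik h]
    simp only [unshufFun]
    rw [dif_neg (not_lt.2 hl), ← hg']
    have h6 : σ ⟨i + ((ℓ:ℕ) - i), by have := ℓ.isLt; omega⟩ = σ ℓ :=
      congrArg σ (Fin.ext (by show i + ((ℓ:ℕ) - i) = (ℓ:ℕ); omega))
    exact congrArg Fin.val h6

lemma unshuffle_sum_eq {β : Type*} [AddCommMonoid β] (hik : i ≤ k)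
    (G : Finset (Fin k) → β) :
    (∑ σ ∈ univ.filter (fun σ : Equiv.Perm (Fin k) =>
        (∀ a b : Fin k, a < b → (b : ℕ) < i → σ a < σ b) ∧
        (∀ a b : Fin k, a < b → i ≤ (a : ℕ) → σ a < σ b)),
      G (((univ : Finset (Fin k)).filter (fun ℓ : Fin k => (ℓ:ℕ) < i)).image σ))
    = ∑ S ∈ Finset.powersetCard i (univ : Finset (Fin k)), G S := by
  refine Finset.sum_nbij'
    (i := fun σ => ((univ : Finset (Fin k)).filter (fun ℓ : Fin k => (ℓ:ℕ) < i)).image σ)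
    (j := fun S => toPerm hik S) ?_ ?_ ?_ ?_ ?_
  · intro σ hσ
    exact Finset.mem_powersetCard_univ.2 (image_card hik σ)
  · intro S hS
    have h : S.card = i := Finset.mem_powersetCard_univ.1 hS
    exact Finset.mem_filter.2 ⟨mem_univ _, toPerm_mem hik h⟩
  · intro σ hσ
    obtain ⟨h1, h2⟩ := (Finset.mem_filter.1 hσ).2
    exact toPerm_image_eq hik σ h1 h2
  · intro S hS
    exact toPerm_image hik (Finset.mem_powersetCard_univ.1 hS)
  · intro σ hσ; rfl

lemma card_subsets {α : Type*} [DecidableEq α] [Fintype α] (T : Finset α) (i : ℕ)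
    (hT : T.card ≤ i) :
    ((Finset.powersetCard i (univ : Finset α)).filter (fun S => T ⊆ S)).card
      = (Fintype.card α - T.card).choose (i - T.card) := by
  rw [← Finset.card_compl T, ← Finset.card_powersetCard]
  apply Finset.card_nbij' (i := fun S => S \ T) (j := fun U => U ∪ T)
  · intro S hS
    obtain ⟨hS1, hS2⟩ := Finset.mem_filter.1 hS
    have hc : S.card = i := Finset.mem_powersetCard_univ.1 hS1
    refine Finset.mem_powersetCard.2 ⟨?_, ?_⟩
    · intro x hx
      rw [Finset.mem_compl]
      exact (Finset.mem_sdiff.1 hx).2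
    · rw [Finset.card_sdiff_of_subset hS2, hc]
  · intro U hU
    obtain ⟨hU1, hU2⟩ := Finset.mem_powersetCard.1 hU
    have hdisj : Disjoint U T := by
      refine Finset.disjoint_left.2 (fun x hx hxT => ?_)
      exact (Finset.mem_compl.1 (hU1 hx)) hxT
    refine Finset.mem_filter.2 ⟨Finset.mem_powersetCard_univ.2 ?_, Finset.subset_union_right⟩
    rw [Finset.card_union_of_disjoint hdisj, hU2]
    omega
  · intro S hS
    exact Finset.sdiff_union_of_subset (Finset.mem_filter.1 hS).2
  · intro U hU
    obtain ⟨hU1, _⟩ := Finset.mem_powersetCard.1 hU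
    refine Finset.union_sdiff_cancel_right ?_
    refine Finset.disjoint_left.2 (fun x hx hxT => ?_)
    exact (Finset.mem_compl.1 (hU1 hx)) hxT

lemma count_pair (k i : ℕ) (hi : 1 ≤ i) (hik : i ≤ k) (s m : Fin k) :
    ((((Finset.powersetCard i (univ : Finset (Fin k))).filter
        (fun S => s ∈ S ∧ m ∈ S)).card : ℤ))
      = if s = m then (((k-1).choose (i-1) : ℕ) : ℤ)
        else (if 2 ≤ i then (((k-2).choose (i-2) : ℕ) : ℤ) else 0) := by
  rcases eq_or_ne s m with rfl | hsm
  · rw [if_pos rfl]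
    rw [Finset.filter_congr (fun S _ => show (s ∈ S ∧ s ∈ S) ↔ ({s} : Finset (Fin k)) ⊆ S by
      simp [Finset.singleton_subset_iff])]
    rw [card_subsets _ i (by simpa using hi)]
    simp [Fintype.card_fin]
  · rw [if_neg hsm]
    have hcard : ({s, m} : Finset (Fin k)).card = 2 := by
      rw [Finset.card_insert_of_notMem (by simpa using hsm), Finset.card_singleton]
    by_cases h2 : 2 ≤ i
    · rw [if_pos h2]
      rw [Finset.filter_congr (fun S _ => show (s ∈ S ∧ m ∈ S) ↔ ({s, m} : Finset (Fin k)) ⊆ S by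
        simp [Finset.insert_subset_iff, Finset.singleton_subset_iff])]
      rw [card_subsets _ i (by omega)]
      rw [hcard, Fintype.card_fin]
    · rw [if_neg h2]
      norm_cast
      rw [Finset.card_eq_zero, Finset.filter_eq_empty_iff]
      intro S hS
      rintro ⟨hs, hm⟩
      have h1 : S.card = i := Finset.mem_powersetCard_univ.1 hS
      have h3 : ({s, m} : Finset (Fin k)) ⊆ S := by
        simp [Finset.insert_subset_iff, Finset.singleton_subset_iff, hs, hm]
      have := Finset.card_le_card h3
      omega

lemma main_comb {β : Type*} [AddCommGroup β] (k i : ℕ) (hi : 1 ≤ i) (hik : i ≤ k)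
    (F : Fin k → Fin k → β) :
    (∑ σ ∈ univ.filter (fun σ : Equiv.Perm (Fin k) =>
        (∀ a b : Fin k, a < b → (b : ℕ) < i → σ a < σ b) ∧
        (∀ a b : Fin k, a < b → i ≤ (a : ℕ) → σ a < σ b)),
      ∑ ℓ ∈ univ.filter (fun ℓ : Fin k => (ℓ:ℕ) < i),
        ∑ t ∈ univ.filter (fun t : Fin k => (t:ℕ) < i), F (σ ℓ) (σ t))
    = (if 2 ≤ i then (((k-2).choose (i-2) : ℕ) : ℤ) else 0) • (∑ s : Fin k, ∑ m : Fin k, F s m)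
      + ((((k-1).choose (i-1) : ℕ) : ℤ) - (if 2 ≤ i then (((k-2).choose (i-2) : ℕ) : ℤ) else 0)) •
        ∑ s : Fin k, F s s := by
  have step1 : ∀ σ : Equiv.Perm (Fin k),
      (∑ ℓ ∈ univ.filter (fun ℓ : Fin k => (ℓ:ℕ) < i),
        ∑ t ∈ univ.filter (fun t : Fin k => (t:ℕ) < i), F (σ ℓ) (σ t))
      = ∑ s ∈ ((univ : Finset (Fin k)).filter (fun ℓ : Fin k => (ℓ:ℕ) < i)).image σ,
          ∑ m ∈ ((univ : Finset (Fin k)).filter (fun ℓ : Fin k => (ℓ:ℕ) < i)).image σ, F s m := by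
    intro σ
    rw [Finset.sum_image (fun x _ y _ h => σ.injective h)]
    exact Finset.sum_congr rfl (fun ℓ _ =>
      (Finset.sum_image (fun x _ y _ h => σ.injective h)).symm)
  rw [Finset.sum_congr rfl (fun σ _ => step1 σ)]
  rw [unshuffle_sum_eq hik (fun S => ∑ s ∈ S, ∑ m ∈ S, F s m)]
  have step2 : ∀ S ∈ Finset.powersetCard i (univ : Finset (Fin k)),
      (∑ s ∈ S, ∑ m ∈ S, F s m)
      = ∑ s : Fin k, ∑ m : Fin k, if s ∈ S ∧ m ∈ S then F s m else 0 := by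
    intro S _
    have hfilter : (univ.filter (fun x : Fin k => x ∈ S)) = S := by ext x; simp
    symm
    calc (∑ s : Fin k, ∑ m : Fin k, if s ∈ S ∧ m ∈ S then F s m else 0)
        = ∑ s : Fin k, if s ∈ S then (∑ m : Fin k, if m ∈ S then F s m else 0) else 0 := by
          refine Finset.sum_congr rfl (fun s _ => ?_)
          by_cases hs : s ∈ S
          · simp [hs]
          · simp [hs]
      _ = ∑ s ∈ S, ∑ m : Fin k, if m ∈ S then F s m else 0 := by
          rw [← Finset.sum_filter, hfilter]
      _ = ∑ s ∈ S, ∑ m ∈ S, F s m := by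
          refine Finset.sum_congr rfl (fun s _ => ?_)
          rw [← Finset.sum_filter, hfilter]
  rw [Finset.sum_congr rfl step2]
  rw [Finset.sum_comm]
  rw [Finset.sum_congr rfl (fun s _ => Finset.sum_comm)]
  have step3 : ∀ s m : Fin k,
      (∑ S ∈ Finset.powersetCard i (univ : Finset (Fin k)),
        if s ∈ S ∧ m ∈ S then F s m else 0)
      = (((Finset.powersetCard i (univ : Finset (Fin k))).filter
          (fun S => s ∈ S ∧ m ∈ S)).card : ℤ) • F s m := by
    intro s m
    rw [Finset.sum_ite, Finset.sum_const, Finset.sum_const_zero, add_zero]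
    rw [Nat.cast_smul_eq_nsmul]
  rw [Finset.sum_congr rfl (fun s _ => Finset.sum_congr rfl (fun m _ => step3 s m))]
  have step4 : ∀ s m : Fin k,
      ((((Finset.powersetCard i (univ : Finset (Fin k))).filter
          (fun S => s ∈ S ∧ m ∈ S)).card : ℤ) • F s m)
      = (if 2 ≤ i then (((k-2).choose (i-2) : ℕ) : ℤ) else 0) • F s m
        + (if s = m then ((((k-1).choose (i-1) : ℕ) : ℤ)
            - (if 2 ≤ i then (((k-2).choose (i-2) : ℕ) : ℤ) else 0)) • F s m else 0) := by
    intro s m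
    rw [count_pair k i hi hik s m]
    rcases eq_or_ne s m with rfl | hsm
    · rw [if_pos rfl, if_pos rfl, sub_smul]
      abel
    · rw [if_neg hsm, if_neg hsm, add_zero]
  rw [Finset.sum_congr rfl (fun s _ => Finset.sum_congr rfl (fun m _ => step4 s m))]
  simp only [Finset.sum_add_distrib]
  congr 1
  · rw [Finset.smul_sum]
    exact Finset.sum_congr rfl (fun s _ => (Finset.smul_sum).symm)
  · rw [Finset.smul_sum]
    refine Finset.sum_congr rfl (fun s _ => ?_)
    rw [Finset.sum_ite_eq univ s
      (fun m => ((((k-1).choose (i-1) : ℕ) : ℤ)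
        - (if 2 ≤ i then (((k-2).choose (i-2) : ℕ) : ℤ) else 0)) • F s m)]
    simp

end Comb


/-- **The unshuffle-counting identity** (the combinatorial core of the proof of Theorem
`Linfinity`).  Fix `k ≥ 1`, `n_1,…,n_k ∈ N`, homogeneous `α_t ∈ Λ^{d t} M`, `1 ≤ i ≤ k`,
`j = k+1−i`, `n := Σ n_t`, and for an `(i,j)`-unshuffle `σ` set `n_σ := Σ_{t≤i} n_{σ(t)}`.
Then
`Σ_{σ∈UnShuff(i,j)} Σ_{ℓ=1}^{i} (−1)^{deg α_1+⋯+deg α_{σ(ℓ)−1}}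
    α_1∧⋯∧ι_{n_σ}(α_{σ(ℓ)})∧⋯∧α_k
 = C(k−2, i−2) ι_n(α_1∧⋯∧α_k)
   + (C(k−1, i−1) − C(k−2, i−2)) Σ_{ℓ=1}^{k} (−1)^{deg α_1+⋯+deg α_{ℓ−1}}
       α_1∧⋯∧ι_{n_ℓ}(α_ℓ)∧⋯∧α_k`,
with the convention `C(a, b) = 0` for `b < 0` (relevant when `i = 1`) or `b > a`. -/
theorem unshuffle_counting (N : Type) [AddCommGroup N] [Module.Free ℤ N] [Module.Finite ℤ N]
    (k : ℕ) (hk : 1 ≤ k) (i j : ℕ) (hi : 1 ≤ i) (hik : i ≤ k) (hj : j = k + 1 - i)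
    (n : Fin k → N) (d : Fin k → ℕ)
    (α : Fin k → ExteriorAlgebra ℤ (Module.Dual ℤ N))
    (hα : ∀ t, α t ∈ ⋀[ℤ]^(d t) (Module.Dual ℤ N)) :
    (∑ σ ∈ Finset.univ.filter (fun σ : Equiv.Perm (Fin k) =>
        (∀ a b : Fin k, a < b → (b : ℕ) < i → σ a < σ b) ∧
        (∀ a b : Fin k, a < b → i ≤ (a : ℕ) → σ a < σ b)),
      ∑ ℓ ∈ Finset.univ.filter (fun ℓ : Fin k => (ℓ : ℕ) < i),
        ((-1 : ℤ) ^ (∑ q ∈ Finset.univ.filter (fun q : Fin k => q < σ ℓ), d q)) •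
          (List.ofFn (Function.update α (σ ℓ)
            (ctr (∑ t ∈ Finset.univ.filter (fun t : Fin k => (t : ℕ) < i), n (σ t))
              (α (σ ℓ))))).prod) =
    (if 2 ≤ i then ((k - 2).choose (i - 2) : ℤ) else 0) •
        ctr (∑ t, n t) (List.ofFn α).prod +
      (((k - 1).choose (i - 1) : ℤ) -
          (if 2 ≤ i then ((k - 2).choose (i - 2) : ℤ) else 0)) •
        ∑ ℓ : Fin k, ((-1 : ℤ) ^ (∑ q ∈ Finset.univ.filter (fun q : Fin k => q < ℓ), d q)) •
          (List.ofFn (Function.update α ℓ (ctr (n ℓ) (α ℓ)))).prod := by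
  have hsum : ∀ (σ : Equiv.Perm (Fin k)) (ℓ : Fin k),
      ((-1 : ℤ) ^ (∑ q ∈ Finset.univ.filter (fun q : Fin k => q < σ ℓ), d q)) •
        (List.ofFn (Function.update α (σ ℓ)
          (ctr (∑ t ∈ Finset.univ.filter (fun t : Fin k => (t : ℕ) < i), n (σ t))
            (α (σ ℓ))))).prod
      = ∑ t ∈ Finset.univ.filter (fun t : Fin k => (t : ℕ) < i),
          ((-1 : ℤ) ^ (∑ q ∈ Finset.univ.filter (fun q : Fin k => q < σ ℓ), d q)) •
            (List.ofFn (Function.update α (σ ℓ) (ctr (n (σ t)) (α (σ ℓ))))).prod := by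
    intro σ ℓ
    rw [ctr_sum, prod_ofFn_update_sum, Finset.smul_sum]
  rw [Finset.sum_congr rfl (fun σ _ => Finset.sum_congr rfl (fun ℓ _ => hsum σ ℓ))]
  rw [main_comb k i hi hik (fun s m =>
    ((-1 : ℤ) ^ (∑ q ∈ Finset.univ.filter (fun q : Fin k => q < s), d q)) •
      (List.ofFn (Function.update α s (ctr (n m) (α s)))).prod)]
  have hcol : (∑ s : Fin k, ∑ m : Fin k,
      ((-1 : ℤ) ^ (∑ q ∈ Finset.univ.filter (fun q : Fin k => q < s), d q)) •
        (List.ofFn (Function.update α s (ctr (n m) (α s)))).prod)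
      = ctr (∑ t, n t) (List.ofFn α).prod := by
    rw [ctr_sum]
    rw [Finset.sum_comm]
    exact Finset.sum_congr rfl (fun m _ => (ctr_ofFn_prod (n m) d α hα).symm)
  rw [hcol]
end
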